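/- arXiv:1801.01796 — 9 statements merged into one kernel-verified Lean document; each statement's English description precedes it below -/
import Mathlib

section
/- Let M ≥ 2 be an integer and let U_1, …, U_M be i.i.d. standard Gaussian random variables. For τ > 0 define E(τ) = E[ e^{U_1/√τ} / ( e^{U_1/√τ} + e^{−1/τ} Σ_{j=2}^{M} e^{U_j/√τ} ) ]. Fix R > 0, an integer L_R ≥ 1, nonnegative reals W_1, …, W_{L_R} not all zero, and positive reals φ_1, …, φ_{L_R}, and for each M set τ_M = (R/ln M) · [ (1/L_R) Σ_{r=1}^{L_R} W_r/φ_r ]^{−1}. Then, as M → ∞, E(τ_M) converges to 1 if (1/L_R) Σ_{r=1}^{L_R} W_r/φ_r > 2R, and E(τ_M) converges to 0 if (1/L_R) Σ_{r=1}^{L_R} W_r/φ_r < 2R. -/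
open MeasureTheory ProbabilityTheory Filter

/-- The state-evolution expectation `E(τ)` for section size `M`:
the expectation over i.i.d. standard Gaussians `U_1, …, U_M` of
`e^{U_1/√τ} / (e^{U_1/√τ} + e^{-1/τ} Σ_{j=2}^M e^{U_j/√τ})`. -/
noncomputable def SEexpectation (M : ℕ) (τ : ℝ) : ℝ :=
  ∫ u : Fin M → ℝ,
    (if h : 0 < M then
      Real.exp (u ⟨0, h⟩ / Real.sqrt τ) /
        (Real.exp (u ⟨0, h⟩ / Real.sqrt τ) +
          Real.exp (-(1 / τ)) *
            ∑ j ∈ Finset.univ.erase (⟨0, h⟩ : Fin M), Real.exp (u j / Real.sqrt τ))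
    else 0)
    ∂(Measure.pi fun _ : Fin M => gaussianReal 0 1)

open scoped NNReal ENNReal
open Real


lemma gaussPDF_mul_exp (s x : ℝ) :
    gaussianPDFReal 0 1 x * Real.exp (s * x) = Real.exp (s^2/2) * gaussianPDFReal s 1 x := by
  simp only [gaussianPDFReal, NNReal.coe_one, mul_one, sub_zero]
  rw [mul_assoc, ← Real.exp_add, mul_comm (Real.exp (s^2/2)), mul_assoc, ← Real.exp_add]
  ring_nf

lemma integrable_exp_gauss (s : ℝ) :
    Integrable (fun x => Real.exp (s * x)) (gaussianReal 0 1) := by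
  rw [gaussianReal_of_var_ne_zero 0 one_ne_zero]
  have hm : Measurable fun x => Real.toNNReal (gaussianPDFReal 0 1 x) :=
    (measurable_gaussianPDFReal 0 1).real_toNNReal
  have : gaussianPDF 0 1 = fun x => ((Real.toNNReal (gaussianPDFReal 0 1 x) : ℝ≥0) : ℝ≥0∞) := rfl
  rw [this, integrable_withDensity_iff_integrable_smul hm]
  have : (fun x => Real.toNNReal (gaussianPDFReal 0 1 x) • Real.exp (s * x))
      = fun x => Real.exp (s^2/2) * gaussianPDFReal s 1 x := by
    funext x
    rw [NNReal.smul_def, smul_eq_mul, Real.coe_toNNReal _ (gaussianPDFReal_nonneg 0 1 x),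
      gaussPDF_mul_exp]
  rw [this]
  exact (integrable_gaussianPDFReal s 1).const_mul _

lemma integral_exp_gauss (s : ℝ) :
    ∫ x, Real.exp (s * x) ∂(gaussianReal 0 1) = Real.exp (s^2/2) := by
  rw [gaussianReal_of_var_ne_zero 0 one_ne_zero]
  have hm : Measurable fun x => Real.toNNReal (gaussianPDFReal 0 1 x) :=
    (measurable_gaussianPDFReal 0 1).real_toNNReal
  have h : gaussianPDF 0 1 = fun x => ((Real.toNNReal (gaussianPDFReal 0 1 x) : ℝ≥0) : ℝ≥0∞) := rfl
  rw [h, integral_withDensity_eq_integral_smul hm]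
  have : (fun x => Real.toNNReal (gaussianPDFReal 0 1 x) • Real.exp (s * x))
      = fun x => Real.exp (s^2/2) * gaussianPDFReal s 1 x := by
    funext x
    rw [NNReal.smul_def, smul_eq_mul, Real.coe_toNNReal _ (gaussianPDFReal_nonneg 0 1 x),
      gaussPDF_mul_exp]
  rw [this, integral_const_mul, integral_gaussianPDFReal_eq_one s one_ne_zero, mul_one]

lemma integrable_indicator_bdd {α : Type*} [MeasurableSpace α] (μ : Measure α)
    [IsFiniteMeasure μ] {f : α → ℝ} (hf : Measurable f) (C : ℝ) (hC : ∀ x, |f x| ≤ C) :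
    Integrable f μ :=
  (integrable_const C).mono' hf.aestronglyMeasurable (Filter.Eventually.of_forall hC)

lemma gauss_tail_Ici (t : ℝ) (ht : 0 ≤ t) :
    ((gaussianReal 0 1) (Set.Ici t)).toReal ≤ Real.exp (-(t^2/2)) := by
  have h1 : ((gaussianReal 0 1) (Set.Ici t)).toReal
      = ∫ x, (Set.Ici t).indicator (1 : ℝ → ℝ) x ∂(gaussianReal 0 1) := by
    rw [MeasureTheory.integral_indicator_one measurableSet_Ici]; rfl
  rw [h1]
  have h2 : ∀ x, (Set.Ici t).indicator (1 : ℝ → ℝ) x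
      ≤ Real.exp (-(t^2)) * Real.exp (t * x) := by
    intro x
    rw [← Real.exp_add]
    by_cases hx : x ∈ Set.Ici t
    · rw [Set.indicator_of_mem hx, Pi.one_apply, Real.one_le_exp_iff]
      nlinarith [hx.out]
    · rw [Set.indicator_of_notMem hx]
      positivity
  calc ∫ x, (Set.Ici t).indicator (1 : ℝ → ℝ) x ∂(gaussianReal 0 1)
      ≤ ∫ x, Real.exp (-(t^2)) * Real.exp (t * x) ∂(gaussianReal 0 1) := by
        refine integral_mono ?_ ((integrable_exp_gauss t).const_mul _) h2
        exact integrable_indicator_bdd _ ((measurable_const.indicator measurableSet_Ici)) 1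
          (by intro x; by_cases hx : x ∈ Set.Ici t <;>
            simp [Set.indicator_of_mem, Set.indicator_of_notMem, hx])
    _ = Real.exp (-(t^2)) * Real.exp (t^2/2) := by
        rw [integral_const_mul, integral_exp_gauss]
    _ = Real.exp (-(t^2/2)) := by rw [← Real.exp_add]; ring_nf

lemma gauss_tail_Iic (t : ℝ) (ht : 0 ≤ t) :
    ((gaussianReal 0 1) (Set.Iic (-t))).toReal ≤ Real.exp (-(t^2/2)) := by
  have h1 : ((gaussianReal 0 1) (Set.Iic (-t))).toReal
      = ∫ x, (Set.Iic (-t)).indicator (1 : ℝ → ℝ) x ∂(gaussianReal 0 1) := by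
    rw [MeasureTheory.integral_indicator_one measurableSet_Iic]; rfl
  rw [h1]
  have h2 : ∀ x, (Set.Iic (-t)).indicator (1 : ℝ → ℝ) x
      ≤ Real.exp (-(t^2)) * Real.exp ((-t) * x) := by
    intro x
    rw [← Real.exp_add]
    by_cases hx : x ∈ Set.Iic (-t)
    · rw [Set.indicator_of_mem hx, Pi.one_apply, Real.one_le_exp_iff]
      nlinarith [hx.out]
    · rw [Set.indicator_of_notMem hx]
      positivity
  calc ∫ x, (Set.Iic (-t)).indicator (1 : ℝ → ℝ) x ∂(gaussianReal 0 1)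
      ≤ ∫ x, Real.exp (-(t^2)) * Real.exp ((-t) * x) ∂(gaussianReal 0 1) := by
        refine integral_mono ?_ ((integrable_exp_gauss (-t)).const_mul _) h2
        exact integrable_indicator_bdd _ ((measurable_const.indicator measurableSet_Iic)) 1
          (by intro x; by_cases hx : x ∈ Set.Iic (-t) <;>
            simp [Set.indicator_of_mem, Set.indicator_of_notMem, hx])
    _ = Real.exp (-(t^2)) * Real.exp ((-t)^2/2) := by
        rw [integral_const_mul, integral_exp_gauss]
    _ = Real.exp (-(t^2/2)) := by rw [← Real.exp_add]; ring_nf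

lemma gauss_interval_lb (t : ℝ) (ht : 0 ≤ t) :
    Real.exp (-((t+1)^2/2)) / Real.sqrt (2*Real.pi)
      ≤ ((gaussianReal 0 1) (Set.Ioc t (t+1))).toReal := by
  rw [gaussianReal_apply_eq_integral 0 one_ne_zero,
    ENNReal.toReal_ofReal (integral_nonneg fun x => gaussianPDFReal_nonneg 0 1 x)]
  have hbd : ∀ x ∈ Set.Ioc t (t+1),
      Real.exp (-((t+1)^2/2)) / Real.sqrt (2*Real.pi) ≤ gaussianPDFReal 0 1 x := by
    intro x hx
    simp only [gaussianPDFReal, NNReal.coe_one, mul_one, sub_zero]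
    rw [div_eq_inv_mul]
    refine mul_le_mul_of_nonneg_left ?_ (by positivity)
    rw [Real.exp_le_exp]
    have h1 : 0 ≤ x := le_trans ht hx.1.le
    have h2 : x ≤ t + 1 := hx.2
    nlinarith
  calc Real.exp (-((t+1)^2/2)) / Real.sqrt (2*Real.pi)
      = ∫ _ in Set.Ioc t (t+1), Real.exp (-((t+1)^2/2)) / Real.sqrt (2*Real.pi) := by
        rw [setIntegral_const, Real.volume_real_Ioc_of_le (by linarith)]
        simp
    _ ≤ ∫ x in Set.Ioc t (t+1), gaussianPDFReal 0 1 x := by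
        refine setIntegral_mono_on (integrableOn_const ?_) 
          ((integrable_gaussianPDFReal 0 1).integrableOn) measurableSet_Ioc hbd
        rw [Real.volume_Ioc]; simp

noncomputable def gPi (M : ℕ) : Measure (Fin M → ℝ) := Measure.pi fun _ => gaussianReal 0 1

instance (M : ℕ) : IsProbabilityMeasure (gPi M) := by
  unfold gPi; infer_instance

lemma integral_gPi_prod {M : ℕ} (f : Fin M → ℝ → ℝ) :
    ∫ u, ∏ i, f i (u i) ∂(gPi M) = ∏ i, ∫ x, f i x ∂(gaussianReal 0 1) :=
  by unfold gPi; exact MeasureTheory.integral_fintype_prod_eq_prod f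

lemma integrable_gPi_prod {M : ℕ} (f : Fin M → ℝ → ℝ)
    (hf : ∀ i, Integrable (f i) (gaussianReal 0 1)) :
    Integrable (fun u : Fin M → ℝ => ∏ i, f i (u i)) (gPi M) :=
  by unfold gPi; exact MeasureTheory.Integrable.fintype_prod hf

lemma prod_single_eval {M : ℕ} (g : ℝ → ℝ) (j : Fin M) (u : Fin M → ℝ) :
    ∏ i, (if i = j then g else fun _ => (1:ℝ)) (u i) = g (u j) := by
  rw [Finset.prod_eq_single j]
  · simp
  · intro i _ hij; simp [hij]
  · simp

lemma integrable_comp_eval {M : ℕ} (g : ℝ → ℝ) (hg : Integrable g (gaussianReal 0 1))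
    (j : Fin M) : Integrable (fun u : Fin M → ℝ => g (u j)) (gPi M) := by
  have h := integrable_gPi_prod (fun i => if i = j then g else fun _ => (1:ℝ))
    (fun i => by by_cases hij : i = j <;> simp [hij, hg, integrable_const])
  simpa only [prod_single_eval] using h

lemma integral_comp_eval {M : ℕ} (g : ℝ → ℝ) (j : Fin M) :
    ∫ u, g (u j) ∂(gPi M) = ∫ x, g x ∂(gaussianReal 0 1) := by
  have h := integral_gPi_prod (fun i => if i = j then g else fun _ => (1:ℝ))
  simp only [prod_single_eval] at h
  rw [h, Finset.prod_eq_single j]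
  · simp
  · intro i _ hij; simp [hij]
  · simp

/-- The integrand. -/
noncomputable def Fse (M : ℕ) (h : 0 < M) (s e : ℝ) (u : Fin M → ℝ) : ℝ :=
  Real.exp (u ⟨0, h⟩ * s) /
    (Real.exp (u ⟨0, h⟩ * s) +
      e * ∑ j ∈ Finset.univ.erase (⟨0, h⟩ : Fin M), Real.exp (u j * s))

lemma SE_eq (M : ℕ) (h : 0 < M) (τ : ℝ) :
    SEexpectation M τ = ∫ u, Fse M h (Real.sqrt τ)⁻¹ (Real.exp (-(1/τ))) u ∂(gPi M) := by
  simp only [SEexpectation, dif_pos h, div_eq_mul_inv, Fse, gPi]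

section FseProps

variable {M : ℕ} (h : 0 < M) {s e : ℝ}

lemma sum_exp_nonneg (u : Fin M → ℝ) :
    0 ≤ ∑ j ∈ Finset.univ.erase (⟨0, h⟩ : Fin M), Real.exp (u j * s) :=
  Finset.sum_nonneg fun j _ => (Real.exp_pos _).le

lemma Fse_denom_pos (he : 0 ≤ e) (u : Fin M → ℝ) :
    0 < Real.exp (u ⟨0, h⟩ * s) +
      e * ∑ j ∈ Finset.univ.erase (⟨0, h⟩ : Fin M), Real.exp (u j * s) :=
  lt_add_of_pos_of_le (Real.exp_pos _) (mul_nonneg he (sum_exp_nonneg h u))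

lemma Fse_nonneg (he : 0 ≤ e) (u : Fin M → ℝ) : 0 ≤ Fse M h s e u :=
  div_nonneg (Real.exp_pos _).le (Fse_denom_pos h he u).le

lemma Fse_le_one (he : 0 ≤ e) (u : Fin M → ℝ) : Fse M h s e u ≤ 1 := by
  rw [Fse, div_le_one (Fse_denom_pos h he u)]
  exact le_add_of_nonneg_right (mul_nonneg he (sum_exp_nonneg h u))

lemma Fse_meas : Measurable (Fse M h s e) := by
  apply Measurable.div
  · fun_prop
  · apply Measurable.add
    · fun_prop
    · fun_prop

lemma Fse_integrable (he : 0 ≤ e) : Integrable (Fse M h s e) (gPi M) := by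
  refine integrable_indicator_bdd _ (Fse_meas h) 1 fun u => ?_
  rw [abs_le]
  exact ⟨by linarith [Fse_nonneg h (s := s) he u], Fse_le_one h he u⟩

end FseProps

lemma integral_exp_gauss' (s : ℝ) :
    ∫ x, Real.exp (x * s) ∂(gaussianReal 0 1) = Real.exp (s^2/2) := by
  have h := integral_exp_gauss s
  simp only [mul_comm s] at h
  exact h

lemma integrable_exp_gauss' (s : ℝ) :
    Integrable (fun x => Real.exp (x * s)) (gaussianReal 0 1) := by
  have h := integrable_exp_gauss s
  simp only [mul_comm s] at h
  exact h

lemma integral_exp_eval {M : ℕ} (s : ℝ) (j : Fin M) :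
    ∫ u : Fin M → ℝ, Real.exp (u j * s) ∂(gPi M) = Real.exp (s^2/2) :=
  (integral_comp_eval (fun x => Real.exp (x * s)) j).trans (integral_exp_gauss' s)

lemma integrable_exp_eval {M : ℕ} (s : ℝ) (j : Fin M) :
    Integrable (fun u : Fin M → ℝ => Real.exp (u j * s)) (gPi M) :=
  integrable_comp_eval (fun x => Real.exp (x * s)) (integrable_exp_gauss' s) j

lemma lemA (M : ℕ) (h : 0 < M) (s e b : ℝ) (hs : 0 ≤ s) (he : 0 < e) (hb : 0 ≤ b) :
    1 - ∫ u, Fse M h s e u ∂(gPi M)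
      ≤ Real.exp (-(b^2/2)) + Real.exp (b*s) * e * ((M:ℝ)-1) * Real.exp (s^2/2) := by
  set i0 : Fin M := ⟨0, h⟩ with hi0
  set g1 : ℝ → ℝ := Set.indicator (Set.Iio (-b)) 1 with hg1
  have hg1meas : Measurable g1 := measurable_const.indicator measurableSet_Iio
  have hg1bdd : ∀ x, |g1 x| ≤ 1 := by
    intro x; by_cases hx : x ∈ Set.Iio (-b) <;>
      simp [hg1, Set.indicator_of_mem, Set.indicator_of_notMem, hx]
  have hg1int : Integrable g1 (gaussianReal 0 1) := integrable_indicator_bdd _ hg1meas 1 hg1bdd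
  set g : (Fin M → ℝ) → ℝ := fun u => g1 (u i0)
      + Real.exp (b*s) * e * ∑ j ∈ Finset.univ.erase i0, Real.exp (u j * s) with hgdef
  have hint1 : Integrable (fun u : Fin M → ℝ => g1 (u i0)) (gPi M) :=
    integrable_comp_eval g1 hg1int i0
  have hintsum : Integrable
      (fun u : Fin M → ℝ => ∑ j ∈ Finset.univ.erase i0, Real.exp (u j * s)) (gPi M) :=
    integrable_finset_sum _ fun j _ => integrable_exp_eval s j
  have hint2 : Integrable (fun u : Fin M → ℝ =>
      Real.exp (b*s) * e * ∑ j ∈ Finset.univ.erase i0, Real.exp (u j * s)) (gPi M) :=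
    hintsum.const_mul _
  have hgint : Integrable g (gPi M) := hint1.add hint2
  have hpt : ∀ u, 1 - Fse M h s e u ≤ g u := by
    intro u
    have hsum := sum_exp_nonneg h (s := s) u
    have ht2 : 0 ≤ Real.exp (b*s) * e * ∑ j ∈ Finset.univ.erase i0, Real.exp (u j * s) :=
      mul_nonneg (mul_nonneg (Real.exp_pos _).le he.le) hsum
    by_cases hu : u i0 < -b
    · have h1 : g1 (u i0) = 1 := by
        have hu' : u i0 ∈ Set.Iio (-b) := hu
        simp [hg1, Set.indicator_apply, hu']
      have := Fse_nonneg h (s := s) he.le u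
      rw [hgdef]; dsimp only; rw [h1]; linarith
    · push_neg at hu
      set N := Real.exp (u i0 * s) with hN
      set D := e * ∑ j ∈ Finset.univ.erase i0, Real.exp (u j * s) with hD
      have hNpos : 0 < N := Real.exp_pos _
      have hDnn : 0 ≤ D := mul_nonneg he.le hsum
      have hdpos : 0 < N + D := by linarith
      have heq : 1 - Fse M h s e u = D / (N + D) := by
        show 1 - N / (N + D) = D / (N + D)
        rw [eq_div_iff (ne_of_gt hdpos), sub_mul, div_mul_cancel₀ _ (ne_of_gt hdpos)]
        ring
      have h2 : D / (N + D) ≤ D / N := by gcongr; linarith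
      have h3 : D / N ≤ D * Real.exp (b*s) := by
        rw [div_eq_mul_inv, hN, ← Real.exp_neg]
        refine mul_le_mul_of_nonneg_left ?_ hDnn
        rw [Real.exp_le_exp]
        nlinarith
      have h4 : g1 (u i0) ≥ 0 := by
        by_cases hx : u i0 ∈ Set.Iio (-b) <;>
          simp [hg1, Set.indicator_of_mem, Set.indicator_of_notMem, hx]
      rw [heq, hgdef]; dsimp only
      calc D / (N + D) ≤ D * Real.exp (b*s) := le_trans h2 h3
        _ = Real.exp (b*s) * e * ∑ j ∈ Finset.univ.erase i0, Real.exp (u j * s) := by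
            rw [hD]; ring
        _ ≤ _ := by linarith
  have hF : 1 - ∫ u, Fse M h s e u ∂(gPi M) = ∫ u, (1 - Fse M h s e u) ∂(gPi M) := by
    rw [integral_sub (integrable_const 1) (Fse_integrable h he.le)]
    simp
  rw [hF]
  calc ∫ u, (1 - Fse M h s e u) ∂(gPi M) ≤ ∫ u, g u ∂(gPi M) :=
        integral_mono ((integrable_const 1).sub (Fse_integrable h he.le)) hgint hpt
    _ = (∫ u, g1 (u i0) ∂(gPi M))
        + ∫ u : Fin M → ℝ, Real.exp (b*s) * e * ∑ j ∈ Finset.univ.erase i0,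
            Real.exp (u j * s) ∂(gPi M) := integral_add hint1 hint2
    _ ≤ Real.exp (-(b^2/2)) + Real.exp (b*s) * e * ((M:ℝ)-1) * Real.exp (s^2/2) := by
        gcongr ?_ + ?_
        · rw [integral_comp_eval, hg1, MeasureTheory.integral_indicator_one measurableSet_Iio]
          calc ((gaussianReal 0 1) (Set.Iio (-b))).toReal
              ≤ ((gaussianReal 0 1) (Set.Iic (-b))).toReal := by
                refine ENNReal.toReal_mono (measure_ne_top _ _) ?_
                exact measure_mono Set.Iio_subset_Iic_self
            _ ≤ Real.exp (-(b^2/2)) := gauss_tail_Iic b hb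
        · rw [integral_const_mul, integral_finset_sum _ fun j _ => integrable_exp_eval s j]
          have : ∑ j ∈ Finset.univ.erase i0, ∫ u : Fin M → ℝ, Real.exp (u j * s) ∂(gPi M)
              = ((M:ℝ)-1) * Real.exp (s^2/2) := by
            rw [Finset.sum_congr rfl fun j _ => integral_exp_eval s j, Finset.sum_const,
              Finset.card_erase_of_mem (Finset.mem_univ _), Finset.card_univ, Fintype.card_fin,
              nsmul_eq_mul, Nat.cast_sub h, Nat.cast_one]
          rw [this]; ring_nf; rfl

lemma lemB (M : ℕ) (h : 0 < M) (s e b t : ℝ) (hs : 0 ≤ s) (he : 0 < e) (hb : 0 ≤ b) :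
    ∫ u, Fse M h s e u ∂(gPi M)
      ≤ Real.exp (-(b^2/2)) + ((gaussianReal 0 1) (Set.Iic t)).toReal ^ (M-1)
        + Real.exp (b*s) * e⁻¹ * Real.exp (-(t*s)) := by
  set i0 : Fin M := ⟨0, h⟩ with hi0
  set g1 : ℝ → ℝ := Set.indicator (Set.Ioi b) 1 with hg1
  have hg1meas : Measurable g1 := measurable_const.indicator measurableSet_Ioi
  have hg1bdd : ∀ x, |g1 x| ≤ 1 := by
    intro x; by_cases hx : x ∈ Set.Ioi b <;>
      simp [hg1, Set.indicator_of_mem, Set.indicator_of_notMem, hx]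
  have hg1int : Integrable g1 (gaussianReal 0 1) := integrable_indicator_bdd _ hg1meas 1 hg1bdd
  set g2 : ℝ → ℝ := Set.indicator (Set.Iic t) 1 with hg2
  have hg2meas : Measurable g2 := measurable_const.indicator measurableSet_Iic
  have hg2bdd : ∀ x, |g2 x| ≤ 1 := by
    intro x; by_cases hx : x ∈ Set.Iic t <;>
      simp [hg2, Set.indicator_of_mem, Set.indicator_of_notMem, hx]
  have hg2int : Integrable g2 (gaussianReal 0 1) := integrable_indicator_bdd _ hg2meas 1 hg2bdd
  have hg2nn : ∀ x, 0 ≤ g2 x := by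
    intro x; by_cases hx : x ∈ Set.Iic t <;>
      simp [hg2, Set.indicator_of_mem, Set.indicator_of_notMem, hx]
  set f2 : Fin M → ℝ → ℝ := fun i => if i = i0 then (fun _ => (1:ℝ)) else g2 with hf2
  have hf2int : ∀ i, Integrable (f2 i) (gaussianReal 0 1) := by
    intro i; by_cases hii : i = i0 <;> simp [hf2, hii, hg2int, integrable_const]
  set C : ℝ := Real.exp (b*s) * e⁻¹ * Real.exp (-(t*s)) with hC
  have hCnn : 0 ≤ C := by positivity
  have hint1 : Integrable (fun u : Fin M → ℝ => g1 (u i0)) (gPi M) :=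
    integrable_comp_eval g1 hg1int i0
  have hint2 : Integrable (fun u : Fin M → ℝ => ∏ i, f2 i (u i)) (gPi M) :=
    integrable_gPi_prod f2 hf2int
  have hpt : ∀ u, Fse M h s e u ≤ g1 (u i0) + (∏ i, f2 i (u i)) + C := by
    intro u
    have hsum := sum_exp_nonneg h (s := s) u
    have hg1nn : 0 ≤ g1 (u i0) := by
      by_cases hx : u i0 ∈ Set.Ioi b <;>
        simp [hg1, Set.indicator_of_mem, Set.indicator_of_notMem, hx]
    have hprodnn : 0 ≤ ∏ i, f2 i (u i) := by
      refine Finset.prod_nonneg fun i _ => ?_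
      by_cases hii : i = i0 <;> simp [hf2, hii, hg2nn]
    by_cases hu : b < u i0
    · have h1 : g1 (u i0) = 1 := by
        have hu' : u i0 ∈ Set.Ioi b := hu
        simp [hg1, Set.indicator_apply, hu']
      have := Fse_le_one h (s := s) he.le u
      linarith
    · push_neg at hu
      by_cases hall : ∀ j ∈ Finset.univ.erase i0, u j ≤ t
      · have h2 : (∏ i, f2 i (u i)) = 1 := by
          refine Finset.prod_eq_one fun i _ => ?_
          by_cases hii : i = i0
          · simp [hf2, hii]
          · have hi : i ∈ Finset.univ.erase i0 := Finset.mem_erase.2 ⟨hii, Finset.mem_univ i⟩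
            have hle : u i ∈ Set.Iic t := hall i hi
            simp [hf2, hii, hg2, Set.indicator_apply, hle]
        have := Fse_le_one h (s := s) he.le u
        linarith
      · push_neg at hall
        obtain ⟨j0, hj0mem, hj0⟩ := hall
        set N := Real.exp (u i0 * s) with hN
        set D := e * ∑ j ∈ Finset.univ.erase i0, Real.exp (u j * s) with hD
        have hsumge : Real.exp (t * s) ≤ ∑ j ∈ Finset.univ.erase i0, Real.exp (u j * s) := by
          calc Real.exp (t * s) ≤ Real.exp (u j0 * s) := by
                rw [Real.exp_le_exp]
                exact mul_le_mul_of_nonneg_right hj0.le hs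
            _ ≤ _ := Finset.single_le_sum (f := fun j => Real.exp (u j * s))
                (fun j _ => (Real.exp_pos _).le) hj0mem
        have hDpos : 0 < D := lt_of_lt_of_le (by positivity)
          (mul_le_mul_of_nonneg_left hsumge he.le)
        have hNpos : 0 < N := Real.exp_pos _
        have hle1 : Fse M h s e u ≤ N / D := by
          show N / (N + D) ≤ N / D
          gcongr
          all_goals linarith
        have hle2 : N / D ≤ C := by
          rw [hC]
          have hNle : N ≤ Real.exp (b*s) := by
            rw [hN, Real.exp_le_exp]
            exact mul_le_mul_of_nonneg_right hu hs
          have hDge : e * Real.exp (t*s) ≤ D := mul_le_mul_of_nonneg_left hsumge he.le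
          calc N / D ≤ Real.exp (b*s) / (e * Real.exp (t*s)) :=
                div_le_div₀ (Real.exp_pos _).le hNle (by positivity) hDge
            _ = Real.exp (b*s) * e⁻¹ * Real.exp (-(t*s)) := by
                rw [div_eq_mul_inv, mul_inv, Real.exp_neg]; ring
        linarith [le_trans hle1 hle2]
  calc ∫ u, Fse M h s e u ∂(gPi M)
      ≤ ∫ u, (g1 (u i0) + (∏ i, f2 i (u i)) + C) ∂(gPi M) := by
        refine integral_mono (Fse_integrable h he.le) ?_ hpt
        exact (hint1.add hint2).add (integrable_const C)
    _ = (∫ u, g1 (u i0) ∂(gPi M)) + (∫ u : Fin M → ℝ, ∏ i, f2 i (u i) ∂(gPi M)) + C := by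
        have e1 : ∫ u, (g1 (u i0) + (∏ i, f2 i (u i)) + C) ∂(gPi M)
            = (∫ u, (g1 (u i0) + ∏ i, f2 i (u i)) ∂(gPi M)) + ∫ _u : Fin M → ℝ, C ∂(gPi M) :=
          integral_add (hint1.add hint2) (integrable_const C)
        have e2 : ∫ u, (g1 (u i0) + ∏ i, f2 i (u i)) ∂(gPi M)
            = (∫ u, g1 (u i0) ∂(gPi M)) + ∫ u : Fin M → ℝ, ∏ i, f2 i (u i) ∂(gPi M) :=
          integral_add hint1 hint2
        rw [e1, e2, integral_const]
        simp
    _ ≤ Real.exp (-(b^2/2)) + ((gaussianReal 0 1) (Set.Iic t)).toReal ^ (M-1) + C := by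
        gcongr ?_ + ?_ + _
        · rw [integral_comp_eval, hg1, MeasureTheory.integral_indicator_one measurableSet_Ioi]
          calc ((gaussianReal 0 1) (Set.Ioi b)).toReal
              ≤ ((gaussianReal 0 1) (Set.Ici b)).toReal := by
                refine ENNReal.toReal_mono (measure_ne_top _ _) ?_
                exact measure_mono Set.Ioi_subset_Ici_self
            _ ≤ Real.exp (-(b^2/2)) := gauss_tail_Ici b hb
        · rw [integral_gPi_prod]
          have hval : ∀ i, ∫ x, f2 i x ∂(gaussianReal 0 1)
              = if i = i0 then 1 else ((gaussianReal 0 1) (Set.Iic t)).toReal := by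
            intro i
            by_cases hii : i = i0
            · simp [hf2, hii]
            · simp only [hf2, hii, if_false]
              rw [hg2, MeasureTheory.integral_indicator_one measurableSet_Iic]; rfl
          rw [Finset.prod_congr rfl fun i _ => hval i]
          rw [← Finset.mul_prod_erase Finset.univ _ (Finset.mem_univ i0), if_pos rfl, one_mul]
          have : ∀ i ∈ Finset.univ.erase i0,
              (if i = i0 then (1:ℝ) else ((gaussianReal 0 1) (Set.Iic t)).toReal)
                = ((gaussianReal 0 1) (Set.Iic t)).toReal := by
            intro i hi
            rw [if_neg (Finset.mem_erase.1 hi).1]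
          rw [Finset.prod_congr rfl this, Finset.prod_const,
            Finset.card_erase_of_mem (Finset.mem_univ _), Finset.card_univ, Fintype.card_fin]

lemma Fse_int_nonneg {M : ℕ} (h : 0 < M) {s e : ℝ} (he : 0 ≤ e) :
    0 ≤ ∫ u, Fse M h s e u ∂(gPi M) :=
  integral_nonneg (Fse_nonneg h he)

lemma Fse_int_le_one {M : ℕ} (h : 0 < M) {s e : ℝ} (he : 0 ≤ e) :
    ∫ u, Fse M h s e u ∂(gPi M) ≤ 1 := by
  calc ∫ u, Fse M h s e u ∂(gPi M) ≤ ∫ _u : Fin M → ℝ, (1:ℝ) ∂(gPi M) :=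
        integral_mono (Fse_integrable h he) (integrable_const 1) (Fse_le_one h he)
    _ = 1 := by simp

lemma log_nat_tendsto : Tendsto (fun M : ℕ => Real.log M) atTop atTop :=
  Real.tendsto_log_atTop.comp tendsto_natCast_atTop_atTop

lemma exp_neg_mul_log_tendsto (d : ℝ) (hd : 0 < d) :
    Tendsto (fun M : ℕ => Real.exp (-(d * Real.log M))) atTop (nhds 0) := by
  have h2 : Tendsto (fun M : ℕ => d * Real.log M) atTop atTop :=
    log_nat_tendsto.const_mul_atTop hd
  exact Real.tendsto_exp_atBot.comp (tendsto_neg_atTop_atBot.comp h2)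

lemma part1 (R c : ℝ) (hR : 0 < R) (hc : 0 < c) (h2 : 2*R < c) :
    Tendsto (fun M : ℕ => SEexpectation M ((R / Real.log M) * c⁻¹)) atTop (nhds 1) := by
  set a : ℝ := c / (2*R) with hadef
  have ha1 : 1 < a := (one_lt_div (by positivity)).2 h2
  have ha0 : 0 < a := by positivity
  set ε : ℝ := (a-1)/(4*a) with hεdef
  have hε : 0 < ε := div_pos (by linarith) (by linarith)
  set d1 : ℝ := ε^2*a with hd1def
  set d2 : ℝ := (a-1)/2 with hd2def
  have hd1 : 0 < d1 := by positivity
  have hd2 : 0 < d2 := div_pos (by linarith) two_pos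
  have hlo : Tendsto (fun M : ℕ =>
      1 - (Real.exp (-(d1 * Real.log M)) + Real.exp (-(d2 * Real.log M)))) atTop (nhds 1) := by
    have hsum := (exp_neg_mul_log_tendsto d1 hd1).add (exp_neg_mul_log_tendsto d2 hd2)
    have h0 : Tendsto (fun M : ℕ =>
        1 - (Real.exp (-(d1 * Real.log M)) + Real.exp (-(d2 * Real.log M)))) atTop
        (nhds (1 - (0+0))) := Tendsto.sub tendsto_const_nhds hsum
    simpa using h0
  refine tendsto_of_tendsto_of_tendsto_of_le_of_le' hlo tendsto_const_nhds ?_ ?_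
  · -- lower bound eventually
    filter_upwards [eventually_ge_atTop 2] with M hM
    have h : 0 < M := by omega
    have hM2 : (2:ℝ) ≤ (M:ℝ) := by exact_mod_cast hM
    have hlog : 0 < Real.log M := Real.log_pos (by linarith)
    set τM : ℝ := (R / Real.log M) * c⁻¹ with hτMdef
    have hτ : 0 < τM := mul_pos (div_pos hR hlog) (inv_pos.2 hc)
    set s : ℝ := (Real.sqrt τM)⁻¹ with hsdef
    have hs : 0 ≤ s := inv_nonneg.2 (Real.sqrt_nonneg _)
    have hss : s * s = 2*a*Real.log M := by
      rw [hsdef, ← mul_inv, Real.mul_self_sqrt hτ.le, hτMdef, hadef]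
      field_simp
    have hinv : 1 / τM = 2*a*Real.log M := by
      rw [hτMdef, hadef]; field_simp
    set e : ℝ := Real.exp (-(1/τM)) with hedef
    have hSE : SEexpectation M τM = ∫ u, Fse M h s e u ∂(gPi M) := SE_eq M h τM
    have hbd := lemA M h s e (ε*s) hs (Real.exp_pos _) (mul_nonneg hε.le hs)
    have hs2 : s^2 = 2*a*Real.log M := by rw [pow_two, hss]
    have hT1 : Real.exp (-((ε*s)^2/2)) = Real.exp (-(d1 * Real.log M)) := by
      congr 1
      rw [mul_pow, hs2, hd1def]; ring
    have hT2 : Real.exp ((ε*s)*s) * e * ((M:ℝ)-1) * Real.exp (s^2/2)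
        ≤ Real.exp (-(d2 * Real.log M)) := by
      have hMe : (M:ℝ) - 1 ≤ Real.exp (Real.log M) := by
        rw [Real.exp_log (by positivity : (0:ℝ) < (M:ℝ))]; linarith
      calc Real.exp ((ε*s)*s) * e * ((M:ℝ)-1) * Real.exp (s^2/2)
          ≤ Real.exp ((ε*s)*s) * e * Real.exp (Real.log M) * Real.exp (s^2/2) := by
            have hnn : 0 ≤ Real.exp ((ε*s)*s) * e := by positivity
            have := mul_le_mul_of_nonneg_left hMe hnn
            exact mul_le_mul_of_nonneg_right this (Real.exp_pos _).le
        _ = Real.exp ((ε*s)*s + (-(1/τM)) + Real.log M + s^2/2) := by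
            rw [hedef, ← Real.exp_add, ← Real.exp_add, ← Real.exp_add]
        _ = Real.exp (-(d2 * Real.log M)) := by
            congr 1
            rw [mul_assoc, hss, hinv, hs2, hεdef, hd2def]
            field_simp
            ring
    have hfinal : 1 - (Real.exp (-(d1 * Real.log M)) + Real.exp (-(d2 * Real.log M)))
        ≤ SEexpectation M τM := by
      rw [hSE]
      have := hbd
      rw [hT1] at this
      linarith
    exact hfinal
  · filter_upwards [eventually_ge_atTop 2] with M hM
    have h : 0 < M := by omega
    rw [SE_eq M h]
    exact Fse_int_le_one h (Real.exp_pos _).le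

lemma tendsto_lin_sub_sqrt (β γ0 K : ℝ) (hβ : 0 < β) (hγ0 : 0 < γ0) :
    Tendsto (fun M : ℕ => β * Real.log M - γ0 * Real.sqrt (2*Real.log M) - K)
      atTop atTop := by
  have h1 : Tendsto (fun M : ℕ => β/2 * Real.log M) atTop atTop :=
    log_nat_tendsto.const_mul_atTop (by positivity)
  have hhalf := tendsto_atTop_add_const_right atTop (-K) h1
  refine tendsto_atTop_mono' _ ?_ hhalf
  have hev : ∀ᶠ M : ℕ in atTop, max 1 (8*γ0^2/β^2) ≤ Real.log M :=
    log_nat_tendsto.eventually_ge_atTop _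
  filter_upwards [hev] with M hM
  set x := Real.log M with hx
  have hx1 : 1 ≤ x := le_trans (le_max_left _ _) hM
  have hx2 : 8*γ0^2/β^2 ≤ x := le_trans (le_max_right _ _) hM
  have hx0 : 0 ≤ x := by linarith
  have hsq : Real.sqrt (2*x) ≤ β*x/(2*γ0) := by
    have h1 : 2*x ≤ (β*x/(2*γ0))^2 := by
      rw [div_pow, le_div_iff₀ (by positivity)]
      have h8 : 8*γ0^2 ≤ β^2 * x := by
        rw [div_le_iff₀ (by positivity)] at hx2
        linarith
      nlinarith
    calc Real.sqrt (2*x) ≤ Real.sqrt ((β*x/(2*γ0))^2) := Real.sqrt_le_sqrt h1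
      _ = β*x/(2*γ0) := Real.sqrt_sq (by positivity)
  have : γ0 * Real.sqrt (2*x) ≤ β*x/2 := by
    have := mul_le_mul_of_nonneg_left hsq hγ0.le
    calc γ0 * Real.sqrt (2*x) ≤ γ0 * (β*x/(2*γ0)) := this
      _ = β*x/2 := by field_simp
  linarith

lemma part2 (R c : ℝ) (hR : 0 < R) (hc : 0 < c) (h2 : c < 2*R) :
    Tendsto (fun M : ℕ => SEexpectation M ((R / Real.log M) * c⁻¹)) atTop (nhds 0) := by
  set a : ℝ := c / (2*R) with hadef
  have ha0 : 0 < a := by positivity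
  have ha1 : a < 1 := (div_lt_one (by positivity)).2 h2
  set r : ℝ := Real.sqrt a with hrdef
  have hr0 : 0 < r := Real.sqrt_pos.2 ha0
  have hr1 : r < 1 := by
    rw [hrdef, show (1:ℝ) = Real.sqrt 1 by rw [Real.sqrt_one]]
    exact Real.sqrt_lt_sqrt ha0.le ha1
  have hr2 : r^2 = a := Real.sq_sqrt ha0.le
  set γ0 : ℝ := (1+r)/2 with hγ0def
  have hγ0pos : 0 < γ0 := by positivity
  have hγ0lt : γ0 < 1 := by rw [hγ0def]; linarith
  set ε : ℝ := (1-r)/(4*r) with hεdef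
  have hε : 0 < ε := div_pos (by linarith) (by positivity)
  set δ : ℝ := r*(1-r)/2 with hδdef
  have hδ : 0 < δ := by
    rw [hδdef]
    have : 0 < 1 - r := by linarith
    positivity
  set d1 : ℝ := ε^2*a with hd1def
  have hd1 : 0 < d1 := by positivity
  set β : ℝ := 1 - γ0^2 with hβdef
  have hβ : 0 < β := by rw [hβdef]; nlinarith
  set K : ℝ := Real.log 2 + 1/2 + Real.log (Real.sqrt (2*Real.pi)) with hKdef
  set t : ℕ → ℝ := fun M => γ0 * Real.sqrt (2*Real.log M) with htdef
  set P : ℕ → ℝ := fun M => Real.exp (-((t M + 1)^2/2)) / Real.sqrt (2*Real.pi) with hPdef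
  -- the middle term tends to infinity
  have hA : Tendsto (fun M : ℕ => ((M:ℝ)-1) * P M) atTop atTop := by
    refine tendsto_atTop_mono' _ ?_
      (Real.tendsto_exp_atTop.comp (tendsto_lin_sub_sqrt β γ0 K hβ hγ0pos))
    filter_upwards [eventually_ge_atTop 2,
      log_nat_tendsto.eventually_ge_atTop 0] with M hM hlog0
    have hM2 : (2:ℝ) ≤ (M:ℝ) := by exact_mod_cast hM
    set x := Real.log M with hx
    have ht0 : 0 ≤ t M := by
      rw [htdef]; positivity
    have htsq : (t M)^2 = γ0^2 * (2*x) := by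
      rw [htdef, mul_pow, Real.sq_sqrt (by linarith)]
    have hPeq : P M = Real.exp (-((t M + 1)^2/2) - Real.log (Real.sqrt (2*Real.pi))) := by
      rw [hPdef, Real.exp_sub, Real.exp_log (Real.sqrt_pos.2 (by positivity))]
    have hM1 : Real.exp (x - Real.log 2) ≤ (M:ℝ) - 1 := by
      rw [Real.exp_sub, Real.exp_log two_pos, hx, Real.exp_log (by positivity : (0:ℝ) < (M:ℝ))]
      linarith
    have hPnn : 0 ≤ P M := by rw [hPdef]; positivity
    calc Real.exp (β * x - γ0 * Real.sqrt (2*x) - K)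
        = Real.exp (x - Real.log 2) * P M := by
          rw [hPeq, ← Real.exp_add]
          congr 1
          have hexpand : (t M + 1)^2/2 = γ0^2*x + t M + 1/2 := by
            have : (t M + 1)^2 = (t M)^2 + 2*(t M) + 1 := by ring
            rw [this, htsq]; ring
          rw [hexpand, hKdef, hβdef, htdef]
          ring
      _ ≤ ((M:ℝ)-1) * P M := mul_le_mul_of_nonneg_right hM1 hPnn
  have hmid : Tendsto (fun M : ℕ => Real.exp (-(((M:ℝ)-1) * P M))) atTop (nhds 0) :=
    Real.tendsto_exp_atBot.comp (tendsto_neg_atTop_atBot.comp hA)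
  have hU : Tendsto (fun M : ℕ => Real.exp (-(d1 * Real.log M))
      + Real.exp (-(((M:ℝ)-1) * P M)) + Real.exp (-(δ * Real.log M))) atTop (nhds 0) := by
    have := ((exp_neg_mul_log_tendsto d1 hd1).add hmid).add (exp_neg_mul_log_tendsto δ hδ)
    simpa using this
  refine tendsto_of_tendsto_of_tendsto_of_le_of_le' tendsto_const_nhds hU ?_ ?_
  · filter_upwards [eventually_ge_atTop 2] with M hM
    have h : 0 < M := by omega
    rw [SE_eq M h]
    exact Fse_int_nonneg h (Real.exp_pos _).le
  · filter_upwards [eventually_ge_atTop 2] with M hM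
    have h : 0 < M := by omega
    have hM2 : (2:ℝ) ≤ (M:ℝ) := by exact_mod_cast hM
    have hlog : 0 < Real.log M := Real.log_pos (by linarith)
    set τM : ℝ := (R / Real.log M) * c⁻¹ with hτMdef
    have hτ : 0 < τM := mul_pos (div_pos hR hlog) (inv_pos.2 hc)
    set s : ℝ := (Real.sqrt τM)⁻¹ with hsdef
    have hs : 0 ≤ s := inv_nonneg.2 (Real.sqrt_nonneg _)
    have hss : s * s = 2*a*Real.log M := by
      rw [hsdef, ← mul_inv, Real.mul_self_sqrt hτ.le, hτMdef, hadef]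
      field_simp
    have hs2 : s^2 = 2*a*Real.log M := by rw [pow_two, hss]
    have hinv : 1 / τM = 2*a*Real.log M := by
      rw [hτMdef, hadef]; field_simp
    set e : ℝ := Real.exp (-(1/τM)) with hedef
    have hSE : SEexpectation M τM = ∫ u, Fse M h s e u ∂(gPi M) := SE_eq M h τM
    -- t M * s
    have hseq : s = Real.sqrt (2*a*Real.log M) := by
      rw [← Real.sqrt_mul_self hs, hss]
    have hts : t M * s = γ0 * (2*r*Real.log M) := by
      have e1 : Real.sqrt (2*Real.log M) * Real.sqrt (2*a*Real.log M) = 2*r*Real.log M := by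
        rw [← Real.sqrt_mul (by positivity : (0:ℝ) ≤ 2*Real.log M)]
        have h1 : 2*Real.log M * (2*a*Real.log M) = (2*r*Real.log M)^2 := by
          rw [← hr2]; ring
        rw [h1, Real.sqrt_sq (mul_nonneg (by positivity : (0:ℝ) ≤ 2*r) hlog.le)]
      calc t M * s = γ0 * (Real.sqrt (2*Real.log M) * Real.sqrt (2*a*Real.log M)) := by
            simp only [htdef, hseq]; ring
        _ = γ0 * (2*r*Real.log M) := by rw [e1]
    have hbd := lemB M h s e (ε*s) (t M) hs (Real.exp_pos _) (mul_nonneg hε.le hs)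
    rw [hSE]
    have hT1 : Real.exp (-((ε*s)^2/2)) = Real.exp (-(d1 * Real.log M)) := by
      congr 1
      rw [mul_pow, hs2, hd1def]; ring
    have hT3 : Real.exp ((ε*s)*s) * e⁻¹ * Real.exp (-(t M*s))
        = Real.exp (-(δ * Real.log M)) := by
      rw [hedef, ← Real.exp_neg, neg_neg, ← Real.exp_add, ← Real.exp_add]
      congr 1
      rw [mul_assoc, hss, hinv, hts, hεdef, hδdef, hγ0def, ← hr2]
      field_simp
      ring
    -- middle term bound
    have ht0 : 0 ≤ t M := by rw [htdef]; positivity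
    set q : ℝ := ((gaussianReal 0 1) (Set.Iic (t M))).toReal with hqdef
    set p' : ℝ := ((gaussianReal 0 1) (Set.Ioc (t M) (t M + 1))).toReal with hp'def
    have hp'P : P M ≤ p' := gauss_interval_lb (t M) ht0
    have hq0 : 0 ≤ q := ENNReal.toReal_nonneg
    have hqp : q + p' ≤ 1 := by
      have hdisj : Disjoint (Set.Iic (t M)) (Set.Ioc (t M) (t M + 1)) :=
        Set.Iic_disjoint_Ioc le_rfl
      have hmeas : (gaussianReal 0 1) (Set.Iic (t M)) + (gaussianReal 0 1) (Set.Ioc (t M) (t M + 1))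
          = (gaussianReal 0 1) (Set.Iic (t M) ∪ Set.Ioc (t M) (t M + 1)) :=
        (measure_union hdisj measurableSet_Ioc).symm
      have hle : (gaussianReal 0 1) (Set.Iic (t M) ∪ Set.Ioc (t M) (t M + 1)) ≤ 1 :=
        prob_le_one
      rw [hqdef, hp'def, ← ENNReal.toReal_add (measure_ne_top _ _) (measure_ne_top _ _), hmeas]
      calc ((gaussianReal 0 1) (Set.Iic (t M) ∪ Set.Ioc (t M) (t M + 1))).toReal
          ≤ (1:ℝ≥0∞).toReal := ENNReal.toReal_mono (by simp) hle
        _ = 1 := by simp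
    have hp'1 : p' ≤ 1 := by
      have : 0 ≤ p' := ENNReal.toReal_nonneg
      linarith
    have hT2 : q ^ (M-1) ≤ Real.exp (-(((M:ℝ)-1) * P M)) := by
      have hcast : ((M-1 : ℕ) : ℝ) = (M:ℝ) - 1 := by
        rw [Nat.cast_sub (by omega), Nat.cast_one]
      calc q ^ (M-1) ≤ (1-p') ^ (M-1) := pow_le_pow_left₀ hq0 (by linarith) _
        _ ≤ (Real.exp (-p')) ^ (M-1) := by
            refine pow_le_pow_left₀ (by linarith [ENNReal.toReal_nonneg (a := (gaussianReal 0 1) (Set.Iic (t M)))]) ?_ _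
            have := Real.add_one_le_exp (-p')
            linarith
        _ = Real.exp (((M-1:ℕ):ℝ) * (-p')) := by
            rw [← Real.exp_nat_mul]
        _ ≤ Real.exp (-(((M:ℝ)-1) * P M)) := by
            rw [Real.exp_le_exp, hcast]
            have h1 : ((M:ℝ)-1) * P M ≤ ((M:ℝ)-1) * p' :=
              mul_le_mul_of_nonneg_left hp'P (by linarith)
            linarith
    calc ∫ u, Fse M h s e u ∂(gPi M)
        ≤ Real.exp (-((ε*s)^2/2)) + q ^ (M-1) + Real.exp ((ε*s)*s) * e⁻¹ * Real.exp (-(t M*s)) := hbd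
      _ ≤ Real.exp (-(d1 * Real.log M)) + Real.exp (-(((M:ℝ)-1) * P M))
          + Real.exp (-(δ * Real.log M)) := by
          rw [hT1, hT3]
          linarith

theorem stmt_0 (R : ℝ) (hR : 0 < R) (LR : ℕ) (hLR : 1 ≤ LR)
    (W φ : Fin LR → ℝ) (hW : ∀ r, 0 ≤ W r) (hWnz : ∃ r, W r ≠ 0)
    (hφ : ∀ r, 0 < φ r) :
    ((1 : ℝ) / LR * ∑ r, W r / φ r > 2 * R →
      Tendsto
        (fun M : ℕ =>
          SEexpectation M ((R / Real.log M) * ((1 : ℝ) / LR * ∑ r, W r / φ r)⁻¹))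
        atTop (nhds 1)) ∧
    ((1 : ℝ) / LR * ∑ r, W r / φ r < 2 * R →
      Tendsto
        (fun M : ℕ =>
          SEexpectation M ((R / Real.log M) * ((1 : ℝ) / LR * ∑ r, W r / φ r)⁻¹))
        atTop (nhds 0)) := by
  have hLR' : (0:ℝ) < LR := by exact_mod_cast hLR
  have hsumpos : 0 < ∑ r, W r / φ r := by
    obtain ⟨r0, hr0⟩ := hWnz
    exact Finset.sum_pos' (fun r _ => div_nonneg (hW r) (hφ r).le)
      ⟨r0, Finset.mem_univ r0, div_pos ((hW r0).lt_of_ne (Ne.symm hr0)) (hφ r0)⟩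
  have hc : 0 < (1 : ℝ) / LR * ∑ r, W r / φ r := by positivity
  exact ⟨fun hgt => part1 R _ hR hc hgt, fun hlt => part2 R _ hR hc hlt⟩
end

section
/- Assume R < (1/(2κ)) ln(1 + κ·snr) and ω > ( 1/(e^{2Rκ} − 1) − 1/(κ·snr) )^{−1}. Then in the asymptotic state-evolution recursion for the (ω,Λ) base matrix, the first and last columns decode in the first iteration: ψ̄_1^1 = 0 and ψ̄_Λ^1 = 0. -/
/-- The asymptotic state-evolution variance update for the `(ω, Λ)` base matrix:
`φ_r = σ²(1 + (κ·snr/ω) Σ_{c = c̲_r}^{c̄_r} ψ_c)` with `κ = (Λ+ω-1)/Λ`, `snr = P/σ²`,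
`c̲_r = max(1, r-ω+1)` and `c̄_r = min(r, Λ)`. -/
noncomputable def phiSE (σ2 P : ℝ) (ω Λ : ℕ) (ψ : ℕ → ℝ) (r : ℕ) : ℝ :=
  σ2 * (1 + (((Λ : ℝ) + ω - 1) / Λ) * (P / σ2) / ω *
    ∑ c ∈ Finset.Icc (max 1 (r + 1 - ω)) (min r Λ), ψ c)

/-- The asymptotic state-evolution recursion for the `(ω, Λ)` base matrix:
`ψ_c^0 = 1` and `ψ_c^{t+1} = 1 - 𝟙{(P/ω) Σ_{r=c}^{c+ω-1} 1/φ_r^t > 2R}`. -/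
noncomputable def psiSE (σ2 P R : ℝ) (ω Λ : ℕ) : ℕ → ℕ → ℝ
  | 0 => fun _ => 1
  | t + 1 => fun c =>
      1 - (if 2 * R < P / ω *
              ∑ r ∈ Finset.Icc c (c + ω - 1), (phiSE σ2 P ω Λ (psiSE σ2 P R ω Λ t) r)⁻¹
           then 1 else 0)

lemma telescope_log_le (a : ℝ) (ha : 0 < a) :
    ∀ n : ℕ, Real.log (1 + (n + 1) * a) - Real.log (1 + a)
      ≤ ∑ j ∈ Finset.Icc 1 n, a / (1 + j * a) := by
  intro n
  induction n with
  | zero => simp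
  | succ n ih =>
      rw [Finset.sum_Icc_succ_top (by omega)]
      have hu : (0:ℝ) < 1 + (n + 1) * a := by positivity
      have hlog : Real.log (1 + ((n:ℝ) + 1 + 1) * a) - Real.log (1 + ((n:ℝ) + 1) * a)
          ≤ a / (1 + ((n:ℝ) + 1) * a) := by
        have h1 : Real.log ((1 + ((n:ℝ) + 1 + 1) * a) / (1 + ((n:ℝ) + 1) * a))
            ≤ (1 + ((n:ℝ) + 1 + 1) * a) / (1 + ((n:ℝ) + 1) * a) - 1 :=
          Real.log_le_sub_one_of_pos (by positivity)
        rw [Real.log_div (by positivity) (by positivity)] at h1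
        have h2 : (1 + ((n:ℝ) + 1 + 1) * a) / (1 + ((n:ℝ) + 1) * a) - 1
            = a / (1 + ((n:ℝ) + 1) * a) := by field_simp; ring
        linarith [h1, h2.le, h2.ge]
      push_cast
      push_cast at ih
      linarith

lemma analytic_bound (R κ s : ℝ) (n : ℕ) (hR : 0 < R) (hκ : 0 < κ) (hs : 0 < s)
    (hn : 1 ≤ n)
    (hRcap : R < 1 / (2 * κ) * Real.log (1 + s))
    (hbig : (1 / (Real.exp (2 * R * κ) - 1) - 1 / s)⁻¹ < (n : ℝ)) :
    2 * R < κ⁻¹ * ∑ j ∈ Finset.Icc 1 n, (s / n) / (1 + j * (s / n)) := by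
  have hw : (0:ℝ) < (n : ℝ) := by exact_mod_cast hn
  set w : ℝ := (n : ℝ) with hwdef
  set a : ℝ := s / w with hadef
  have ha : 0 < a := div_pos hs hw
  have hRκ : 0 < 2 * R * κ := by positivity
  set d : ℝ := Real.exp (2 * R * κ) - 1 with hddef
  have hd : 0 < d := by
    have := Real.add_one_lt_exp (x := 2 * R * κ) (by positivity)
    simp only [hddef]; linarith
  -- d < s
  have hds : d < s := by
    have h1 : 2 * R * κ < Real.log (1 + s) := by
      have := mul_lt_mul_of_pos_left hRcap (by positivity : (0:ℝ) < 2 * κ)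
      calc 2 * R * κ = 2 * κ * R := by ring
        _ < 2 * κ * (1 / (2 * κ) * Real.log (1 + s)) := this
        _ = Real.log (1 + s) := by field_simp
    have h2 : Real.exp (2 * R * κ) < 1 + s := by
      calc Real.exp (2 * R * κ) < Real.exp (Real.log (1 + s)) := Real.exp_lt_exp.mpr h1
        _ = 1 + s := Real.exp_log (by linarith)
    simp only [hddef]; linarith
  have hx : 0 < 1 / d - 1 / s := by
    have := one_div_lt_one_div_of_lt hd hds
    linarith
  have hinv : w⁻¹ < 1 / d - 1 / s := (inv_lt_comm₀ hx hw).mp hbig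
  -- key: d * (1 + a) < s
  have hkey : d * (1 + a) < s := by
    have h1 : w⁻¹ + 1 / s < 1 / d := by linarith
    have h2 : d * (w⁻¹ + 1 / s) < 1 := by
      calc d * (w⁻¹ + 1 / s) < d * (1 / d) := mul_lt_mul_of_pos_left h1 hd
        _ = 1 := by field_simp
    have h3 : s * (d * (w⁻¹ + 1 / s)) < s * 1 := mul_lt_mul_of_pos_left h2 hs
    have h4 : s * (d * (w⁻¹ + 1 / s)) = d * s / w + d := by field_simp
    have h5 : d * (1 + a) = d + d * s / w := by rw [hadef]; ring
    nlinarith [h3, h4, h5]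
  -- 2Rκ < log(1+s+a) - log(1+a)
  have hlog : 2 * R * κ < Real.log (1 + s + a) - Real.log (1 + a) := by
    have hexp : Real.exp (2 * R * κ) * (1 + a) < 1 + s + a := by
      have : Real.exp (2 * R * κ) = d + 1 := by simp [hddef]
      rw [this]; nlinarith
    rw [← Real.log_div (by positivity) (by positivity)]
    rw [Real.lt_log_iff_exp_lt (by positivity)]
    rw [lt_div_iff₀ (by positivity)]
    exact hexp
  -- the telescope
  have htel := telescope_log_le a ha n
  have hna : 1 + ((n:ℝ) + 1) * a = 1 + s + a := by
    rw [hadef, ← hwdef]; field_simp; ring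
  rw [hna] at htel
  have h6 : 2 * R * κ < ∑ j ∈ Finset.Icc 1 n, a / (1 + j * a) := lt_of_lt_of_le hlog htel
  have h7 := mul_lt_mul_of_pos_left h6 (inv_pos.mpr hκ)
  calc 2 * R = κ⁻¹ * (2 * R * κ) := by field_simp
    _ < κ⁻¹ * ∑ j ∈ Finset.Icc 1 n, a / (1 + j * a) := h7

theorem stmt_2 (σ2 P R snr κ : ℝ) (ω Λ : ℕ)
    (hσ2 : 0 < σ2) (hP : 0 < P) (hR : 0 < R)
    (hω : 1 ≤ ω) (hΛ : 2 * ω - 1 ≤ Λ)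
    (hsnr : snr = P / σ2) (hκ : κ = ((Λ : ℝ) + ω - 1) / Λ)
    (hRcap : R < 1 / (2 * κ) * Real.log (1 + κ * snr))
    (hωbig : (1 / (Real.exp (2 * R * κ) - 1) - 1 / (κ * snr))⁻¹ < (ω : ℝ)) :
    psiSE σ2 P R ω Λ 1 1 = 0 ∧ psiSE σ2 P R ω Λ 1 Λ = 0 := by
  have hωΛ : ω ≤ Λ := by omega
  have hΛ1 : 1 ≤ Λ := by omega
  have hΛR : (1:ℝ) ≤ (Λ:ℝ) := by exact_mod_cast hΛ1
  have hωR : (1:ℝ) ≤ (ω:ℝ) := by exact_mod_cast hω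
  have hωpos : (0:ℝ) < (ω:ℝ) := by linarith
  have hκpos : 0 < κ := by
    rw [hκ]
    apply div_pos <;> linarith
  have hsnrpos : 0 < snr := by rw [hsnr]; positivity
  have hspos : 0 < κ * snr := mul_pos hκpos hsnrpos
  set A : ℝ := (((Λ : ℝ) + ω - 1) / Λ) * (P / σ2) / ω with hAdef
  have hAa : A = (κ * snr) / (ω : ℝ) := by rw [hAdef, hκ, hsnr]
  have hApos : 0 < A := by rw [hAa]; positivity
  -- phi with all-ones psi, generic form
  have hφ : ∀ r : ℕ, phiSE σ2 P ω Λ (fun _ => 1) r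
      = σ2 * (1 + A * ((min r Λ + 1 - max 1 (r + 1 - ω) : ℕ) : ℝ)) := by
    intro r
    rw [phiSE, Finset.sum_const, Nat.card_Icc, nsmul_eq_mul, mul_one, hAdef]
  -- key analytic bound on the canonical sum
  have hcore : 2 * R < P / (ω:ℝ) * ∑ j ∈ Finset.Icc 1 ω, (σ2 * (1 + A * (j:ℕ)))⁻¹ := by
    have h1 := analytic_bound R κ (κ * snr) ω hR hκpos hspos hω hRcap hωbig
    have h2 : P / (ω:ℝ) * ∑ j ∈ Finset.Icc 1 ω, (σ2 * (1 + A * (j:ℕ)))⁻¹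
        = κ⁻¹ * ∑ j ∈ Finset.Icc 1 ω, (κ * snr / ω) / (1 + j * (κ * snr / ω)) := by
      rw [Finset.mul_sum, Finset.mul_sum]
      refine Finset.sum_congr rfl fun j hj => ?_
      have hjpos : (0:ℝ) ≤ A * (j:ℕ) := mul_nonneg hApos.le (Nat.cast_nonneg j)
      have hpos : (0:ℝ) < 1 + A * (j:ℕ) := by linarith
      have hne1 : (1:ℝ) + (j:ℝ) * (κ * snr / ω) ≠ 0 := by
        rw [hAa] at hpos
        have : (1:ℝ) + κ * snr / ↑ω * ↑j = 1 + ↑j * (κ * snr / ↑ω) := by ring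
        rw [this] at hpos; linarith
      rw [hAa, hsnr]
      rw [hsnr] at hne1
      field_simp
    rw [h2]
    exact h1
  -- sum over first window equals canonical sum
  have hsum1 : ∑ r ∈ Finset.Icc 1 ω, (phiSE σ2 P ω Λ (fun _ => 1) r)⁻¹
      = ∑ j ∈ Finset.Icc 1 ω, (σ2 * (1 + A * (j:ℕ)))⁻¹ := by
    refine Finset.sum_congr rfl fun r hr => ?_
    obtain ⟨hr1, hr2⟩ := Finset.mem_Icc.mp hr
    rw [hφ r]
    have he : min r Λ + 1 - max 1 (r + 1 - ω) = r := by omega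
    rw [he]
  -- sum over last window equals canonical sum
  have hsum2 : ∑ r ∈ Finset.Icc Λ (Λ + ω - 1), (phiSE σ2 P ω Λ (fun _ => 1) r)⁻¹
      = ∑ j ∈ Finset.Icc 1 ω, (σ2 * (1 + A * (j:ℕ)))⁻¹ := by
    have e1 : Λ + ω - 1 + 1 - Λ = ω := by omega
    have e2 : ω + 1 - 1 = ω := by omega
    calc ∑ r ∈ Finset.Icc Λ (Λ + ω - 1), (phiSE σ2 P ω Λ (fun _ => 1) r)⁻¹
        = ∑ i ∈ Finset.range ω,
            (fun i => (σ2 * (1 + A * ((1 + i : ℕ):ℝ)))⁻¹) (ω - 1 - i) := by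
          rw [← Finset.Ico_add_one_right_eq_Icc, Finset.sum_Ico_eq_sum_range, e1]
          refine Finset.sum_congr rfl fun i hi => ?_
          have hi' : i < ω := Finset.mem_range.mp hi
          rw [hφ (Λ + i)]
          have he : min (Λ + i) Λ + 1 - max 1 (Λ + i + 1 - ω) = 1 + (ω - 1 - i) := by
            omega
          rw [he]
      _ = ∑ i ∈ Finset.range ω, (σ2 * (1 + A * ((1 + i : ℕ):ℝ)))⁻¹ :=
          Finset.sum_range_reflect (fun i => (σ2 * (1 + A * ((1 + i : ℕ):ℝ)))⁻¹) ω
      _ = ∑ j ∈ Finset.Icc 1 ω, (σ2 * (1 + A * (j:ℕ)))⁻¹ := by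
          rw [← Finset.Ico_add_one_right_eq_Icc, Finset.sum_Ico_eq_sum_range, e2]
  constructor
  · show psiSE σ2 P R ω Λ (0 + 1) 1 = 0
    rw [psiSE, psiSE]
    have e : 1 + ω - 1 = ω := by omega
    simp only [e, hsum1]
    rw [if_pos hcore]
    ring
  · show psiSE σ2 P R ω Λ (0 + 1) Λ = 0
    rw [psiSE, psiSE]
    simp only [hsum2]
    rw [if_pos hcore]
    ring
end

section
/- Assume R < (1/(2κ)) ln(1 + κ·snr) and ω > ( 1/(e^{2Rκ} − 1) − 1/(κ·snr) )^{−1}, and let c* = min{ ω−1, ⌊ ω·((1 + κ·snr)/(κ·snr)²)·( ln(1 + κ·snr) − 2Rκ ) ⌋ }. Then in the asymptotic state-evolution recursion for the (ω,Λ) base matrix, the first and last c* columns decode in the first iteration: ψ̄_c^1 = 0 for every c ∈ {1,…,c*} ∪ {Λ−c*+1,…,Λ}. -/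
lemma phiSE_one (σ2 P : ℝ) (ω Λ r : ℕ) (hω : 1 ≤ ω) (hΛ : ω ≤ Λ)
    (h1 : 1 ≤ r) (h2 : r ≤ Λ + ω - 1) :
    phiSE σ2 P ω Λ (fun _ => 1) r
      = σ2 * (1 + (((Λ : ℝ) + ω - 1) / Λ) * (P / σ2) / ω *
          ((min (min r ω) (Λ + ω - r) : ℕ) : ℝ)) := by
  have hcard : (Finset.Icc (max 1 (r + 1 - ω)) (min r Λ)).card
      = min (min r ω) (Λ + ω - r) := by
    rw [Nat.card_Icc]; omega
  unfold phiSE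
  rw [Finset.sum_const, nsmul_eq_mul, mul_one, hcard]

lemma sum_inv_log_bound (a : ℝ) (ha : 0 < a) (ω c : ℕ) (hω : 0 < ω) (hc : c ≤ ω) :
    Real.log (1 + a) - Real.log (1 + a / ω * c) ≤
      (a / ω) * ∑ r ∈ Finset.Ico c ω, (1 + a / ω * r)⁻¹ := by
  have hωR : (0:ℝ) < (ω:ℝ) := by exact_mod_cast hω
  set f : ℕ → ℝ := fun r => Real.log (1 + a / ω * r) with hf
  have hpos : ∀ r : ℕ, (0:ℝ) < 1 + a / ω * r := by
    intro r; positivity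
  have tele : ∑ r ∈ Finset.Ico c ω, (f (r+1) - f r) = f ω - f c := by
    rw [Finset.sum_Ico_eq_sub _ hc, Finset.sum_range_sub, Finset.sum_range_sub]
    ring
  have fω : f ω = Real.log (1 + a) := by
    simp only [hf]
    congr 1
    field_simp
  have key : ∀ r : ℕ, f (r+1) - f r ≤ (a/ω) * (1 + a / ω * r)⁻¹ := by
    intro r
    have h1 := hpos r
    have h2 : (0:ℝ) < 1 + a/ω*((r:ℝ)+1) := by positivity
    have hq : (0:ℝ) < (1 + a/ω*(r+1)) / (1 + a/ω*r) := by positivity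
    have hlog := Real.log_le_sub_one_of_pos hq
    rw [Real.log_div (ne_of_gt h2) (ne_of_gt h1)] at hlog
    have heq : (1 + a/ω*((r:ℝ)+1)) / (1 + a/ω*(r:ℝ)) - 1 = (a/ω) * (1 + a/ω*(r:ℝ))⁻¹ := by
      field_simp
      ring
    have hc1 : f (r+1) = Real.log (1 + a/ω*((r:ℝ)+1)) := by simp [hf]
    have hc2 : f r = Real.log (1 + a/ω*(r:ℝ)) := by simp [hf]
    rw [hc1, hc2]
    linarith [heq ▸ hlog]
  calc Real.log (1 + a) - Real.log (1 + a / ω * c) = f ω - f c := by rw [fω]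
    _ = ∑ r ∈ Finset.Ico c ω, (f (r+1) - f r) := tele.symm
    _ ≤ ∑ r ∈ Finset.Ico c ω, (a/ω) * (1 + a / ω * r)⁻¹ :=
        Finset.sum_le_sum (fun r _ => key r)
    _ = (a / ω) * ∑ r ∈ Finset.Ico c ω, (1 + a / ω * r)⁻¹ := by
        rw [Finset.mul_sum]

lemma key_bound (σ2 P R snr κ : ℝ) (ω Λ cstar : ℕ)
    (hσ2 : 0 < σ2) (hP : 0 < P) (hR : 0 < R)
    (hω : 1 ≤ ω) (hΛ : 2 * ω - 1 ≤ Λ)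
    (hsnr : snr = P / σ2) (hκ : κ = ((Λ : ℝ) + ω - 1) / Λ)
    (hRcap : R < 1 / (2 * κ) * Real.log (1 + κ * snr))
    (hcstar : cstar =
      min (ω - 1)
        (⌊(ω : ℝ) * ((1 + κ * snr) / (κ * snr) ^ 2) *
            (Real.log (1 + κ * snr) - 2 * R * κ)⌋.toNat))
    (c : ℕ) (hc1 : 1 ≤ c) (hc2 : c ≤ cstar) :
    2 * R < P / ω * ∑ r ∈ Finset.Icc c (c + ω - 1),
      (σ2 * (1 + κ * snr / ω * ((min r ω : ℕ) : ℝ)))⁻¹ := by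
  have hΛ0 : 0 < Λ := by omega
  have hΛR : (1:ℝ) ≤ (Λ:ℝ) := by exact_mod_cast hΛ0
  have hωR : (0:ℝ) < (ω:ℝ) := by exact_mod_cast (by omega : 0 < ω)
  have hκpos : 0 < κ := by
    rw [hκ]
    apply div_pos _ (by linarith)
    have : (1:ℝ) ≤ (ω:ℝ) := by exact_mod_cast hω
    linarith
  have hs : 0 < snr := by rw [hsnr]; positivity
  set a := κ * snr with ha_def
  have ha : 0 < a := mul_pos hκpos hs
  set B := Real.log (1 + a) with hB
  have hcω : c ≤ ω - 1 := le_trans hc2 (by rw [hcstar]; exact min_le_left _ _)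
  have hω2 : 2 ≤ ω := by omega
  have hcR : (1:ℝ) ≤ (c:ℝ) := by exact_mod_cast hc1
  -- 2Rκ < B
  have hLgt : 2 * R * κ < B := by
    have h := mul_lt_mul_of_pos_left hRcap (by positivity : (0:ℝ) < 2*κ)
    rw [show 2*κ*(1/(2*κ) * B) = B by field_simp] at h
    linarith
  -- real bound on c
  have hcreal : (c:ℝ) ≤ (ω:ℝ) * ((1 + a) / a ^ 2) * (B - 2 * R * κ) := by
    set X : ℝ := (ω:ℝ) * ((1 + a) / a ^ 2) * (B - 2 * R * κ) with hX
    have hXpos : 0 ≤ X := by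
      apply mul_nonneg (by positivity) (by linarith)
    have h1 : c ≤ ⌊X⌋.toNat := le_trans hc2 (by rw [hcstar]; exact min_le_right _ _)
    have h0 : 0 ≤ ⌊X⌋ := Int.floor_nonneg.mpr hXpos
    calc (c:ℝ) ≤ ((⌊X⌋.toNat : ℕ) : ℝ) := by exact_mod_cast h1
      _ = ((⌊X⌋ : ℤ) : ℝ) := by exact_mod_cast Int.toNat_of_nonneg h0
      _ ≤ X := Int.floor_le X
  -- rewrite sum
  have hsplit : Finset.Icc c (c + ω - 1) = Finset.Ico c (c + ω) := by
    rw [← Finset.Ico_add_one_right_eq_Icc]; congr 1; omega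
  rw [hsplit, ← Finset.sum_Ico_consecutive _ (show c ≤ ω by omega) (show ω ≤ c + ω by omega)]
  have e1 : ∑ r ∈ Finset.Ico c ω, (σ2 * (1 + a / ω * ((min r ω : ℕ) : ℝ)))⁻¹
      = σ2⁻¹ * ∑ r ∈ Finset.Ico c ω, (1 + a / ω * (r : ℝ))⁻¹ := by
    rw [Finset.mul_sum]
    apply Finset.sum_congr rfl
    intro r hr
    rw [Finset.mem_Ico] at hr
    rw [min_eq_left (le_of_lt hr.2), mul_inv]
  have e2 : ∑ r ∈ Finset.Ico ω (c + ω), (σ2 * (1 + a / ω * ((min r ω : ℕ) : ℝ)))⁻¹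
      = (c : ℝ) * (σ2 * (1 + a))⁻¹ := by
    have hterm : ∀ r ∈ Finset.Ico ω (c + ω),
        (σ2 * (1 + a / ω * ((min r ω : ℕ) : ℝ)))⁻¹ = (σ2 * (1 + a))⁻¹ := by
      intro r hr
      rw [Finset.mem_Ico] at hr
      rw [min_eq_right hr.1]
      congr 2
      field_simp
    rw [Finset.sum_congr rfl hterm, Finset.sum_const, Nat.card_Ico, nsmul_eq_mul,
      Nat.add_sub_cancel]
  rw [e1, e2]
  -- lower bound the first sum
  set S := ∑ r ∈ Finset.Ico c ω, (1 + a / ω * (r : ℝ))⁻¹ with hS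
  have hSge : (ω / a) * (B - Real.log (1 + a / ω * c)) ≤ S := by
    have h := sum_inv_log_bound a ha ω c (by omega) (by omega)
    have h2 := mul_le_mul_of_nonneg_left h (le_of_lt (div_pos hωR ha))
    calc (ω / a) * (B - Real.log (1 + a / ω * c))
        ≤ (ω / a) * ((a / ω) * S) := h2
      _ = S := by
          field_simp
  set M := Real.log (1 + a / ω * c) with hM
  have hMlt : M < a / ω * c := by
    have hx : (0:ℝ) < a / ω * c := by positivity
    have := Real.log_lt_sub_one_of_pos (show (0:ℝ) < 1 + a/ω*c by linarith)
      (by nlinarith)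
    linarith
  -- final arithmetic
  have hPs : P = σ2 * snr := by rw [hsnr]; field_simp
  have hfin1 : P / ω * (σ2⁻¹ * S + (c:ℝ) * (σ2 * (1 + a))⁻¹)
      = snr / ω * S + snr * c / (ω * (1 + a)) := by
    rw [hPs]; field_simp
  rw [hfin1]
  have h2 : snr / ω * S ≥ snr / ω * ((ω / a) * (B - M)) := by
    apply mul_le_mul_of_nonneg_left hSge (by positivity)
  have h3 : snr / ω * ((ω / a) * (B - M)) = snr / a * (B - M) := by
    field_simp
  have h4 : snr / a * (B - M) > snr / a * (B - a / ω * c) := by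
    apply mul_lt_mul_of_pos_left _ (by positivity)
    linarith
  have h6 : snr * a / (ω * (1 + a)) * c
      ≤ snr * a / (ω * (1 + a)) * ((ω:ℝ) * ((1 + a) / a ^ 2) * (B - 2 * R * κ)) :=
    mul_le_mul_of_nonneg_left hcreal (by positivity)
  have h7 : snr * a / (ω * (1 + a)) * ((ω:ℝ) * ((1 + a) / a ^ 2) * (B - 2 * R * κ))
      = B / κ - 2 * R := by
    rw [ha_def]
    field_simp
  have h8 : snr / a * (B - a / ω * c) + snr * c / (ω * (1 + a))
      = snr / a * B - snr * a / (ω * (1 + a)) * c := by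
    rw [ha_def]
    field_simp
    ring
  have h9 : snr / a * B = B / κ := by
    rw [ha_def]; field_simp
  linarith [h2, h4, h6]

theorem stmt_3 (σ2 P R snr κ : ℝ) (ω Λ cstar : ℕ)
    (hσ2 : 0 < σ2) (hP : 0 < P) (hR : 0 < R)
    (hω : 1 ≤ ω) (hΛ : 2 * ω - 1 ≤ Λ)
    (hsnr : snr = P / σ2) (hκ : κ = ((Λ : ℝ) + ω - 1) / Λ)
    (hRcap : R < 1 / (2 * κ) * Real.log (1 + κ * snr))
    (hωbig : (1 / (Real.exp (2 * R * κ) - 1) - 1 / (κ * snr))⁻¹ < (ω : ℝ))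
    (hcstar : cstar =
      min (ω - 1)
        (⌊(ω : ℝ) * ((1 + κ * snr) / (κ * snr) ^ 2) *
            (Real.log (1 + κ * snr) - 2 * R * κ)⌋.toNat)) :
    ∀ c ∈ Finset.Icc 1 cstar ∪ Finset.Icc (Λ - cstar + 1) Λ,
      psiSE σ2 P R ω Λ 1 c = 0 := by
  intro c hc
  have hcs : cstar ≤ ω - 1 := by rw [hcstar]; exact min_le_left _ _
  have hΛω : ω ≤ Λ := by omega
  simp only [Finset.mem_union, Finset.mem_Icc] at hc
  have main : 2 * R < P / ω *
      ∑ r ∈ Finset.Icc c (c + ω - 1), (phiSE σ2 P ω Λ (psiSE σ2 P R ω Λ 0) r)⁻¹ := by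
    have hψ0 : psiSE σ2 P R ω Λ 0 = fun _ => 1 := rfl
    rw [hψ0]
    rcases hc with ⟨hc1, hc2⟩ | ⟨hc1, hc2⟩
    · -- lower columns
      have hsum : ∑ r ∈ Finset.Icc c (c + ω - 1), (phiSE σ2 P ω Λ (fun _ => 1) r)⁻¹
          = ∑ r ∈ Finset.Icc c (c + ω - 1),
              (σ2 * (1 + κ * snr / ω * ((min r ω : ℕ) : ℝ)))⁻¹ := by
        apply Finset.sum_congr rfl
        intro r hr
        rw [Finset.mem_Icc] at hr
        rw [phiSE_one σ2 P ω Λ r hω hΛω (by omega) (by omega), hκ, hsnr,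
          show min (min r ω) (Λ + ω - r) = min r ω by omega]
      rw [hsum]
      exact key_bound σ2 P R snr κ ω Λ cstar hσ2 hP hR hω hΛ hsnr hκ hRcap hcstar c hc1 hc2
    · -- upper columns, reflect
      set c' := Λ + 1 - c with hc'
      have hc'1 : 1 ≤ c' := by omega
      have hc'2 : c' ≤ cstar := by omega
      have hcbig : ω + 1 ≤ c := by omega
      have hsum : ∑ r ∈ Finset.Icc c (c + ω - 1), (phiSE σ2 P ω Λ (fun _ => 1) r)⁻¹
          = ∑ r ∈ Finset.Icc c' (c' + ω - 1),
              (σ2 * (1 + κ * snr / ω * ((min r ω : ℕ) : ℝ)))⁻¹ := by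
        have l1 : Finset.Icc c (c + ω - 1) = Finset.Ico c (c + ω) := by
          rw [← Finset.Ico_add_one_right_eq_Icc]; congr 1; omega
        have l2 : Finset.Icc c' (c' + ω - 1) = Finset.Ico c' (c' + ω) := by
          rw [← Finset.Ico_add_one_right_eq_Icc]; congr 1; omega
        rw [l1, l2, Finset.sum_Ico_eq_sum_range, Finset.sum_Ico_eq_sum_range,
          Nat.add_sub_cancel_left, Nat.add_sub_cancel_left,
          ← Finset.sum_range_reflect]
        apply Finset.sum_congr rfl
        intro k hk
        rw [Finset.mem_range] at hk
        rw [phiSE_one σ2 P ω Λ (c + (ω - 1 - k)) hω hΛω (by omega) (by omega), hκ, hsnr,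
          show min (min (c + (ω - 1 - k)) ω) (Λ + ω - (c + (ω - 1 - k))) = min (c' + k) ω
            by omega]
      rw [hsum]
      exact key_bound σ2 P R snr κ ω Λ cstar hσ2 hP hR hω hΛ hsnr hκ hRcap hcstar c' hc'1 hc'2
  show (1:ℝ) - (if 2 * R < P / ↑ω *
      ∑ r ∈ Finset.Icc c (c + ω - 1), (phiSE σ2 P ω Λ (psiSE σ2 P R ω Λ 0) r)⁻¹
    then 1 else 0) = 0
  rw [if_pos main]
  norm_num
end

section
/- Assume R < (1/(2κ)) ln(1 + κ·snr) and ω > ( 1/(e^{2Rκ} − 1) − 1/(κ·snr) )^{−1}, and let c* = min{ ω−1, ⌊ ω·((1 + κ·snr)/(κ·snr)²)·( ln(1 + κ·snr) − 2Rκ ) ⌋ }, and suppose c* ≥ 1. Then in the asymptotic state-evolution recursion for the (ω,Λ) base matrix, for every iteration t ≥ 1 one has ψ̄_c^t = 0 for all c ∈ {1,…, min(t·c*, Λ)} ∪ {Λ − min(t·c*, Λ) + 1, …, Λ}. Consequently ψ̄_c^T = 0 for all c ∈ {1,…,Λ} with T = ⌈ Λ/(2c*) ⌉, i.e., the decoder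 fully decodes in at most ⌈ Λ/(2c*) ⌉ iterations. -/
lemma psiSE_zero_or_one (σ2 P R : ℝ) (ω Λ : ℕ) (t c : ℕ) :
    psiSE σ2 P R ω Λ t c = 0 ∨ psiSE σ2 P R ω Λ t c = 1 := by
  cases t with
  | zero => right; rfl
  | succ t =>
    simp only [psiSE]
    split <;> simp

lemma window_sum_le (ψ : ℕ → ℝ) (hψ1 : ∀ c, ψ c ≤ 1) (a L U : ℕ) (hL : 1 ≤ L)
    (hza : ∀ c, 1 ≤ c → c ≤ a → ψ c = 0) :
    ∑ c ∈ Finset.Icc L U, ψ c ≤ ((U - a : ℕ) : ℝ) := by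
  calc ∑ c ∈ Finset.Icc L U, ψ c
      ≤ ∑ c ∈ Finset.Icc L U, (if a < c then (1:ℝ) else 0) := by
        apply Finset.sum_le_sum
        intro i hi
        rw [Finset.mem_Icc] at hi
        by_cases h : a < i
        · simp [h, hψ1 i]
        · simp only [h, if_false]
          rw [hza i (le_trans hL hi.1) (by omega)]
    _ = (((Finset.Icc L U).filter (fun c => a < c)).card : ℝ) := by
        rw [Finset.sum_boole]
    _ ≤ ((Finset.Icc (a+1) U).card : ℝ) := by
        have hsub : (Finset.Icc L U).filter (fun c => a < c) ⊆ Finset.Icc (a+1) U := by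
          intro i hi
          simp only [Finset.mem_filter, Finset.mem_Icc] at hi ⊢
          omega
        exact_mod_cast Finset.card_le_card hsub
    _ = ((U - a : ℕ) : ℝ) := by
        rw [Nat.card_Icc]
        congr 1
        omega

lemma phiSE_pos (σ2 P : ℝ) (ω Λ : ℕ) (hσ2 : 0 < σ2) (hP : 0 < P) (hΛ1 : 1 ≤ Λ)
    (ψ : ℕ → ℝ) (hψ : ∀ c, 0 ≤ ψ c) (r : ℕ) : 0 < phiSE σ2 P ω Λ ψ r := by
  unfold phiSE
  have hΛR : (1:ℝ) ≤ Λ := by exact_mod_cast hΛ1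
  have hωR : (0:ℝ) ≤ ω := Nat.cast_nonneg ω
  have h1 : (0:ℝ) ≤ ((Λ : ℝ) + ω - 1) / Λ * (P / σ2) / ω := by
    apply div_nonneg _ hωR
    apply mul_nonneg
    · apply div_nonneg (by linarith) (by linarith)
    · exact le_of_lt (div_pos hP hσ2)
  have h2 : (0:ℝ) ≤ ∑ c ∈ Finset.Icc (max 1 (r + 1 - ω)) (min r Λ), ψ c :=
    Finset.sum_nonneg fun c _ => hψ c
  have := mul_nonneg h1 h2
  nlinarith

/-- Telescoping log lower bound for the sum of inverses. -/
lemma sum_inv_gt (β : ℝ) (hβ : 0 < β) (m n : ℕ) (hn : 1 ≤ n) :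
    (1/β) * (Real.log (1 + β*((m:ℝ)+n)) - Real.log (1 + β*m)) <
      ∑ k ∈ Finset.Icc m (m+n-1), (1 + β*(k:ℝ))⁻¹ := by
  have key : ∀ y : ℝ, 0 ≤ y →
      (1/β)*Real.log (1+β*(y+1)) - (1/β)*Real.log (1+β*y) < (1+β*y)⁻¹ := by
    intro y hy
    have h1 : (0:ℝ) < 1+β*y := by nlinarith
    have h2 : (0:ℝ) < 1+β*(y+1) := by nlinarith
    have hgt : 1+β*y < 1+β*(y+1) := by nlinarith
    have hne : (1+β*(y+1))/(1+β*y) ≠ 1 := by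
      have : 1 < (1+β*(y+1))/(1+β*y) := (one_lt_div h1).mpr hgt
      exact ne_of_gt this
    have hlog := Real.log_lt_sub_one_of_pos (div_pos h2 h1) hne
    rw [Real.log_div (ne_of_gt h2) (ne_of_gt h1)] at hlog
    have heq : (1+β*(y+1))/(1+β*y) - 1 = β/(1+β*y) := by field_simp; ring
    rw [heq] at hlog
    have := mul_lt_mul_of_pos_left hlog (by positivity : (0:ℝ) < 1/β)
    have h3 : (1/β)*(β/(1+β*y)) = (1+β*y)⁻¹ := by field_simp
    rw [mul_sub, h3] at this
    exact this
  have htel : ∑ i ∈ Finset.range n,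
      ((1/β)*Real.log (1+β*((m:ℝ)+i+1)) - (1/β)*Real.log (1+β*((m:ℝ)+i)))
      = (1/β)*Real.log (1+β*((m:ℝ)+n)) - (1/β)*Real.log (1+β*((m:ℝ)+(0:ℕ))) := by
    have := Finset.sum_range_sub (fun i : ℕ => (1/β)*Real.log (1+β*((m:ℝ)+i))) n
    convert this using 2 with i
    push_cast
    ring_nf
  have hlt : ∑ i ∈ Finset.range n,
      ((1/β)*Real.log (1+β*((m:ℝ)+i+1)) - (1/β)*Real.log (1+β*((m:ℝ)+i)))
      < ∑ i ∈ Finset.range n, (1+β*((m:ℝ)+i))⁻¹ := by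
    apply Finset.sum_lt_sum_of_nonempty (Finset.nonempty_range_iff.mpr (by omega))
    intro i _
    have := key ((m:ℝ)+i) (by positivity)
    exact this
  have hIcc : ∑ i ∈ Finset.range n, (1+β*((m:ℝ)+i))⁻¹
      = ∑ k ∈ Finset.Icc m (m+n-1), (1+β*(k:ℝ))⁻¹ := by
    apply Finset.sum_nbij' (i := fun i => m+i) (j := fun k => k-m)
    · intro i hi; rw [Finset.mem_range] at hi; rw [Finset.mem_Icc]; omega
    · intro k hk; rw [Finset.mem_Icc] at hk; rw [Finset.mem_range]; omega
    · intro i _; omega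
    · intro k hk; rw [Finset.mem_Icc] at hk; omega
    · intro i _; push_cast; ring_nf
  rw [← hIcc]
  calc (1/β) * (Real.log (1 + β*((m:ℝ)+n)) - Real.log (1 + β*m))
      = (1/β)*Real.log (1+β*((m:ℝ)+n)) - (1/β)*Real.log (1+β*((m:ℝ)+(0:ℕ))) := by
        push_cast; ring_nf
    _ = ∑ i ∈ Finset.range n,
        ((1/β)*Real.log (1+β*((m:ℝ)+i+1)) - (1/β)*Real.log (1+β*((m:ℝ)+i))) := htel.symm
    _ < _ := hlt

/-- The key comparison: the log increment over the shifted window dominates `c2`. -/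
lemma delta_ge (x c2 : ℝ) (ω cstar : ℕ) (hx : 0 < x) (hω : 1 ≤ ω)
    (hRL : c2 < Real.log (1+x))
    (hc : (cstar:ℝ) ≤ (ω:ℝ)*((1+x)/x^2)*(Real.log (1+x) - c2)) :
    c2 ≤ Real.log (1 + x/ω*((cstar:ℝ)+ω)) - Real.log (1 + x/ω*cstar) := by
  have hωR : (0:ℝ) < ω := by exact_mod_cast hω
  set u : ℝ := x/ω*cstar with hu
  have hu0 : 0 ≤ u := by positivity
  have e1 : (1:ℝ) + x/ω*((cstar:ℝ)+ω) = 1+u+x := by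
    rw [hu]; field_simp; ring
  rw [e1]
  have h1 : (0:ℝ) < 1+u := by linarith
  have h2 : (0:ℝ) < 1+x := by linarith
  have h3 : (0:ℝ) < 1+u+x := by linarith
  have hlog : Real.log ((1+x)*(1+u)/(1+u+x)) ≤ (1+x)*(1+u)/(1+u+x) - 1 :=
    Real.log_le_sub_one_of_pos (by positivity)
  have h4 : (1+x)*(1+u)/(1+u+x) - 1 = u*x/(1+u+x) := by
    field_simp; ring
  have h5 : u*x/(1+u+x) ≤ u*x/(1+x) := by
    have hmono : 1/(1+u+x) ≤ 1/(1+x) := one_div_le_one_div_of_le h2 (by linarith)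
    calc u*x/(1+u+x) = u*x*(1/(1+u+x)) := by ring
      _ ≤ u*x*(1/(1+x)) := mul_le_mul_of_nonneg_left hmono (mul_nonneg hu0 hx.le)
      _ = u*x/(1+x) := by ring
  have h6 : u*x/(1+x) ≤ Real.log (1+x) - c2 := by
    rw [div_le_iff₀ h2]
    have hgoal : u*x = x^2*(cstar:ℝ)/ω := by rw [hu]; field_simp
    rw [hgoal, div_le_iff₀ hωR]
    have hmul := mul_le_mul_of_nonneg_left hc (le_of_lt (by positivity : (0:ℝ) < x^2))
    have e2 : x^2*((ω:ℝ)*((1+x)/x^2)*(Real.log (1+x) - c2))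
        = (Real.log (1+x)-c2)*(1+x)*ω := by field_simp
    rw [e2] at hmul
    linarith
  have hexp : Real.log ((1+x)*(1+u)/(1+u+x))
      = Real.log (1+x) + Real.log (1+u) - Real.log (1+u+x) := by
    rw [Real.log_div (by positivity) (ne_of_gt h3), Real.log_mul (ne_of_gt h2) (ne_of_gt h1)]
  linarith [hlog, h4 ▸ hlog]

/-- Symmetry of the state evolution recursion. -/
lemma psiSE_symm (σ2 P R : ℝ) (ω Λ : ℕ) (hω : 1 ≤ ω) :
    ∀ t c, 1 ≤ c → c ≤ Λ → psiSE σ2 P R ω Λ t c = psiSE σ2 P R ω Λ t (Λ + 1 - c) := by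
  intro t
  induction t with
  | zero => intros; rfl
  | succ t ih =>
    have hphi : ∀ r, 1 ≤ r → r ≤ Λ + ω - 1 →
        phiSE σ2 P ω Λ (psiSE σ2 P R ω Λ t) r
          = phiSE σ2 P ω Λ (psiSE σ2 P R ω Λ t) (Λ + ω - r) := by
      intro r h1 h2
      unfold phiSE
      have hsum : ∑ c ∈ Finset.Icc (max 1 (r + 1 - ω)) (min r Λ), psiSE σ2 P R ω Λ t c
          = ∑ c ∈ Finset.Icc (max 1 ((Λ + ω - r) + 1 - ω)) (min (Λ + ω - r) Λ),
              psiSE σ2 P R ω Λ t c := by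
        apply Finset.sum_nbij' (i := fun c => Λ + 1 - c) (j := fun c => Λ + 1 - c)
        · intro c hc; simp only [Finset.mem_Icc] at hc ⊢; omega
        · intro c hc; simp only [Finset.mem_Icc] at hc ⊢; omega
        · intro c hc; simp only [Finset.mem_Icc] at hc; omega
        · intro c hc; simp only [Finset.mem_Icc] at hc; omega
        · intro c hc
          simp only [Finset.mem_Icc] at hc
          exact ih c (by omega) (by omega)
      rw [hsum]
    intro c h1 h2
    simp only [psiSE]
    have hsum2 : ∑ r ∈ Finset.Icc c (c + ω - 1),
          (phiSE σ2 P ω Λ (psiSE σ2 P R ω Λ t) r)⁻¹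
        = ∑ r ∈ Finset.Icc (Λ + 1 - c) (Λ + 1 - c + ω - 1),
          (phiSE σ2 P ω Λ (psiSE σ2 P R ω Λ t) r)⁻¹ := by
      apply Finset.sum_nbij' (i := fun r => Λ + ω - r) (j := fun r => Λ + ω - r)
      · intro r hr; simp only [Finset.mem_Icc] at hr ⊢; omega
      · intro r hr; simp only [Finset.mem_Icc] at hr ⊢; omega
      · intro r hr; simp only [Finset.mem_Icc] at hr; omega
      · intro r hr; simp only [Finset.mem_Icc] at hr; omega
      · intro r hr
        simp only [Finset.mem_Icc] at hr
        rw [hphi r (by omega) (by omega)]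
    rw [hsum2]

/-- One-step decoding progress. -/
lemma step_zero (σ2 P R : ℝ) (ω Λ cstar : ℕ)
    (hσ2 : 0 < σ2) (hP : 0 < P) (hω : 1 ≤ ω) (hΛ1 : 1 ≤ Λ)
    (hΔ : 2*R*(((Λ:ℝ)+ω-1)/Λ) ≤
        Real.log (1 + ((Λ:ℝ)+ω-1)/Λ*(P/σ2)/ω * ((cstar:ℝ)+ω)) -
        Real.log (1 + ((Λ:ℝ)+ω-1)/Λ*(P/σ2)/ω * cstar))
    (t a : ℕ) (hza : ∀ c', 1 ≤ c' → c' ≤ a → psiSE σ2 P R ω Λ t c' = 0)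
    (c : ℕ) (hc1 : 1 ≤ c) (hc2 : c ≤ a + cstar) :
    psiSE σ2 P R ω Λ (t+1) c = 0 := by
  have hΛR : (1:ℝ) ≤ Λ := by exact_mod_cast hΛ1
  have hωR : (1:ℝ) ≤ ω := by exact_mod_cast hω
  set β : ℝ := ((Λ:ℝ)+ω-1)/Λ*(P/σ2)/ω with hβdef
  have hβ : 0 < β := by
    rw [hβdef]
    apply div_pos
    · exact mul_pos (div_pos (by linarith) (by linarith)) (div_pos hP hσ2)
    · linarith
  set ψ := psiSE σ2 P R ω Λ t with hψdef
  have hψ0 : ∀ c', 0 ≤ ψ c' := by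
    intro c'
    rcases psiSE_zero_or_one σ2 P R ω Λ t c' with h | h <;> rw [hψdef, h] <;> norm_num
  have hψ1 : ∀ c', ψ c' ≤ 1 := by
    intro c'
    rcases psiSE_zero_or_one σ2 P R ω Λ t c' with h | h <;> rw [hψdef, h] <;> norm_num
  -- pointwise bound on the inverse of phi
  have hphile : ∀ r ∈ Finset.Icc c (c+ω-1),
      (σ2*(1+β*((r - c + cstar : ℕ):ℝ)))⁻¹ ≤ (phiSE σ2 P ω Λ ψ r)⁻¹ := by
    intro r hr
    rw [Finset.mem_Icc] at hr
    have hsumle : ∑ c' ∈ Finset.Icc (max 1 (r+1-ω)) (min r Λ), ψ c'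
        ≤ ((r - c + cstar : ℕ):ℝ) := by
      calc ∑ c' ∈ Finset.Icc (max 1 (r+1-ω)) (min r Λ), ψ c'
          ≤ ((min r Λ - a : ℕ) : ℝ) :=
            window_sum_le ψ hψ1 a _ _ (le_max_left 1 _) (fun c' h1 h2 => hza c' h1 h2)
        _ ≤ ((r - c + cstar : ℕ):ℝ) := by
            have hmin : min r Λ ≤ r := min_le_left r Λ
            have hnat : min r Λ - a ≤ r - c + cstar := by omega
            exact Nat.cast_le.mpr hnat
    have hphiub : phiSE σ2 P ω Λ ψ r ≤ σ2*(1+β*((r-c+cstar:ℕ):ℝ)) := by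
      unfold phiSE
      rw [← hβdef]
      have := mul_le_mul_of_nonneg_left hsumle hβ.le
      nlinarith
    have h0 : 0 < phiSE σ2 P ω Λ ψ r := phiSE_pos σ2 P ω Λ hσ2 hP hΛ1 ψ hψ0 r
    exact inv_anti₀ h0 hphiub
  -- reindex the comparison sum
  have hreindex : ∑ k ∈ Finset.Icc cstar (cstar+ω-1), (σ2*(1+β*(k:ℝ)))⁻¹
      = ∑ r ∈ Finset.Icc c (c+ω-1), (σ2*(1+β*((r-c+cstar:ℕ):ℝ)))⁻¹ := by
    apply Finset.sum_nbij' (i := fun k => k - cstar + c) (j := fun r => r - c + cstar)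
    · intro k hk; rw [Finset.mem_Icc] at hk ⊢; omega
    · intro r hr; rw [Finset.mem_Icc] at hr ⊢; omega
    · intro k hk; rw [Finset.mem_Icc] at hk; omega
    · intro r hr; rw [Finset.mem_Icc] at hr; omega
    · intro k hk
      rw [Finset.mem_Icc] at hk
      have hkk : k - cstar + c - c + cstar = k := by omega
      rw [hkk]
  have hs1 : ∑ k ∈ Finset.Icc cstar (cstar+ω-1), (σ2*(1+β*(k:ℝ)))⁻¹
      ≤ ∑ r ∈ Finset.Icc c (c+ω-1), (phiSE σ2 P ω Λ ψ r)⁻¹ := by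
    rw [hreindex]
    exact Finset.sum_le_sum hphile
  -- core strict bound
  have hcore : (1/β)*(Real.log (1+β*((cstar:ℝ)+ω)) - Real.log (1+β*cstar))
      < ∑ k ∈ Finset.Icc cstar (cstar+ω-1), (1+β*(k:ℝ))⁻¹ :=
    sum_inv_gt β hβ cstar ω hω
  have hfact : ∑ k ∈ Finset.Icc cstar (cstar+ω-1), (σ2*(1+β*(k:ℝ)))⁻¹
      = σ2⁻¹ * ∑ k ∈ Finset.Icc cstar (cstar+ω-1), (1+β*(k:ℝ))⁻¹ := by
    rw [Finset.mul_sum]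
    exact Finset.sum_congr rfl fun k _ => by rw [mul_inv]
  have hcond : 2 * R < P / (ω:ℝ) *
      ∑ r ∈ Finset.Icc c (c + ω - 1), (phiSE σ2 P ω Λ ψ r)⁻¹ := by
    have hPω : (0:ℝ) < P/(ω:ℝ) := div_pos hP (by linarith)
    have hΛne : (Λ:ℝ) ≠ 0 := by linarith
    have hωne : (ω:ℝ) ≠ 0 := by linarith
    have hnum : ((Λ:ℝ)+ω-1) ≠ 0 := by linarith
    have key1 : P/(ω:ℝ) * (σ2⁻¹ * ((1/β)*(2*R*(((Λ:ℝ)+ω-1)/Λ)))) = 2*R := by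
      rw [hβdef]
      field_simp
    have A1 : (1/β)*(2*R*(((Λ:ℝ)+ω-1)/Λ))
        ≤ (1/β)*(Real.log (1+β*((cstar:ℝ)+ω)) - Real.log (1+β*cstar)) :=
      mul_le_mul_of_nonneg_left hΔ (by positivity)
    have A2 : σ2⁻¹ * ((1/β)*(2*R*(((Λ:ℝ)+ω-1)/Λ)))
        < σ2⁻¹ * ∑ k ∈ Finset.Icc cstar (cstar+ω-1), (1+β*(k:ℝ))⁻¹ :=
      mul_lt_mul_of_pos_left (lt_of_le_of_lt A1 hcore) (inv_pos.mpr hσ2)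
    rw [← hfact] at A2
    have A3 : σ2⁻¹ * ((1/β)*(2*R*(((Λ:ℝ)+ω-1)/Λ)))
        < ∑ r ∈ Finset.Icc c (c+ω-1), (phiSE σ2 P ω Λ ψ r)⁻¹ := lt_of_lt_of_le A2 hs1
    calc 2*R = P/(ω:ℝ) * (σ2⁻¹ * ((1/β)*(2*R*(((Λ:ℝ)+ω-1)/Λ)))) := key1.symm
      _ < P/(ω:ℝ) * ∑ r ∈ Finset.Icc c (c+ω-1), (phiSE σ2 P ω Λ ψ r)⁻¹ :=
          mul_lt_mul_of_pos_left A3 hPω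
  simp only [psiSE, ← hψdef]
  rw [if_pos hcond]
  ring

theorem stmt_4 (σ2 P R snr κ : ℝ) (ω Λ cstar : ℕ)
    (hσ2 : 0 < σ2) (hP : 0 < P) (hR : 0 < R)
    (hω : 1 ≤ ω) (hΛ : 2 * ω - 1 ≤ Λ)
    (hsnr : snr = P / σ2) (hκ : κ = ((Λ : ℝ) + ω - 1) / Λ)
    (hRcap : R < 1 / (2 * κ) * Real.log (1 + κ * snr))
    (hωbig : (1 / (Real.exp (2 * R * κ) - 1) - 1 / (κ * snr))⁻¹ < (ω : ℝ))
    (hcstar : cstar =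
      min (ω - 1)
        (⌊(ω : ℝ) * ((1 + κ * snr) / (κ * snr) ^ 2) *
            (Real.log (1 + κ * snr) - 2 * R * κ)⌋.toNat))
    (hcstar1 : 1 ≤ cstar) :
    (∀ t : ℕ, 1 ≤ t →
      ∀ c ∈ Finset.Icc 1 (min (t * cstar) Λ) ∪
            Finset.Icc (Λ - min (t * cstar) Λ + 1) Λ,
        psiSE σ2 P R ω Λ t c = 0) ∧
    (∀ c ∈ Finset.Icc 1 Λ,
      psiSE σ2 P R ω Λ (⌈(Λ : ℝ) / (2 * cstar)⌉₊) c = 0) := by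
  subst hsnr
  subst hκ
  have hΛ1 : 1 ≤ Λ := by omega
  have hΛR : (1:ℝ) ≤ Λ := by exact_mod_cast hΛ1
  have hωR : (1:ℝ) ≤ ω := by exact_mod_cast hω
  set x : ℝ := ((Λ:ℝ)+ω-1)/Λ * (P/σ2) with hxdef
  have hκ1 : (1:ℝ) ≤ ((Λ:ℝ)+ω-1)/Λ := by
    rw [le_div_iff₀ (by linarith)]
    linarith
  have hκpos : (0:ℝ) < ((Λ:ℝ)+ω-1)/Λ := by linarith
  have hx : 0 < x := mul_pos hκpos (div_pos hP hσ2)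
  have hL2Rκ : 2*R*(((Λ:ℝ)+ω-1)/Λ) < Real.log (1+x) := by
    have hpos2 : (0:ℝ) < 2*(((Λ:ℝ)+ω-1)/Λ) := by linarith
    have h := mul_lt_mul_of_pos_left hRcap hpos2
    have he : 2*(((Λ:ℝ)+ω-1)/Λ)*(1/(2*(((Λ:ℝ)+ω-1)/Λ)) * Real.log (1+x))
        = Real.log (1+x) := by
      rw [← mul_assoc, mul_one_div_cancel (ne_of_gt hpos2), one_mul]
    rw [he] at h
    linarith
  have hcR : (cstar:ℝ) ≤ (ω:ℝ)*((1+x)/x^2)*(Real.log (1+x) - 2*R*(((Λ:ℝ)+ω-1)/Λ)) := by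
    set V : ℝ := (ω:ℝ)*((1+x)/x^2)*(Real.log (1+x) - 2*R*(((Λ:ℝ)+ω-1)/Λ)) with hVdef
    have hV0 : 0 ≤ V := by
      rw [hVdef]
      apply mul_nonneg
      · positivity
      · linarith
    have h1 : cstar ≤ (⌊V⌋).toNat := by
      rw [hcstar]
      exact min_le_right _ _
    calc (cstar:ℝ) ≤ ((⌊V⌋).toNat : ℝ) := by exact_mod_cast h1
      _ = ((⌊V⌋ : ℤ) : ℝ) := by
          exact_mod_cast Int.toNat_of_nonneg (Int.floor_nonneg.mpr hV0)
      _ ≤ V := Int.floor_le V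
  have hΔ : 2*R*(((Λ:ℝ)+ω-1)/Λ) ≤
      Real.log (1 + ((Λ:ℝ)+ω-1)/Λ*(P/σ2)/ω * ((cstar:ℝ)+ω)) -
      Real.log (1 + ((Λ:ℝ)+ω-1)/Λ*(P/σ2)/ω * cstar) :=
    delta_ge x (2*R*(((Λ:ℝ)+ω-1)/Λ)) ω cstar hx hω hL2Rκ hcR
  -- main induction
  have key : ∀ t : ℕ, ∀ c ∈ Finset.Icc 1 (min (t * cstar) Λ) ∪
      Finset.Icc (Λ - min (t * cstar) Λ + 1) Λ, psiSE σ2 P R ω Λ t c = 0 := by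
    intro t
    induction t with
    | zero =>
      intro c hc
      simp only [Finset.mem_union, Finset.mem_Icc] at hc
      omega
    | succ t ih =>
      intro c hc
      simp only [Finset.mem_union, Finset.mem_Icc] at hc
      have hza : ∀ c', 1 ≤ c' → c' ≤ min (t * cstar) Λ → psiSE σ2 P R ω Λ t c' = 0 := by
        intro c' h1 h2
        exact ih c' (by simp only [Finset.mem_union, Finset.mem_Icc]; omega)
      have hleft : ∀ c', 1 ≤ c' → c' ≤ min ((t+1) * cstar) Λ →
          psiSE σ2 P R ω Λ (t+1) c' = 0 := by
        intro c' h1 h2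
        have hmul : (t+1)*cstar = t*cstar + cstar := by ring
        exact step_zero σ2 P R ω Λ cstar hσ2 hP hω hΛ1 hΔ t (min (t*cstar) Λ) hza c' h1
          (by omega)
      rcases hc with h | h
      · exact hleft c h.1 h.2
      · rw [psiSE_symm σ2 P R ω Λ hω (t+1) c (by omega) h.2]
        exact hleft (Λ + 1 - c) (by omega) (by omega)
  refine ⟨fun t _ => key t, ?_⟩
  intro c hc
  rw [Finset.mem_Icc] at hc
  set T := ⌈(Λ : ℝ) / (2 * cstar)⌉₊ with hT
  have hcs : (0:ℝ) < 2*(cstar:ℝ) := by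
    have : (1:ℝ) ≤ (cstar:ℝ) := by exact_mod_cast hcstar1
    linarith
  have hTle : (Λ:ℝ) ≤ 2*(cstar:ℝ)*(T:ℝ) := by
    have h := Nat.le_ceil ((Λ : ℝ) / (2 * cstar))
    rw [div_le_iff₀ hcs] at h
    rw [hT]
    linarith
  have hTn : Λ ≤ 2*cstar*T := by exact_mod_cast hTle
  apply key T
  simp only [Finset.mem_union, Finset.mem_Icc]
  have h2 : 2*cstar*T = T*cstar + T*cstar := by ring
  omega
end

section
/- For every snr > 0 and every rate R with 0 < R < 𝒞 = (1/2) ln(1 + snr), there exist integers ω ≥ 1, Λ ≥ 2ω−1, and T ≥ 1 such that the asymptotic state-evolution recursion for the (ω,Λ) base matrix satisfies ψ̄_c^T = 0 for all c ∈ {1,…,Λ}; that is, for all rates below the AWGN channel capacity, spatially coupled SPARCs with an (ω,Λ) base matrix decode fully in the large system limit. -/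
set_option maxHeartbeats 1000000

lemma psiSE_mem (σ2 P R : ℝ) (ω Λ : ℕ) :
    ∀ t c, psiSE σ2 P R ω Λ t c = 0 ∨ psiSE σ2 P R ω Λ t c = 1 := by
  intro t c
  cases t with
  | zero => right; rfl
  | succ t =>
    simp only [psiSE]
    split
    · left; ring
    · right; ring

lemma sum_Icc_shift (c ω : ℕ) (g : ℕ → ℝ) (hc : 1 ≤ c) (hω : 1 ≤ ω) :
    ∑ r ∈ Finset.Icc c (c + ω - 1), g (r - c) = ∑ i ∈ Finset.range ω, g i := by
  apply Finset.sum_nbij' (fun r => r - c) (fun i => i + c)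
  · intro a ha
    simp only [Finset.mem_Icc] at ha
    simp only [Finset.mem_range]
    omega
  · intro a ha
    simp only [Finset.mem_range] at ha
    simp only [Finset.mem_Icc]
    omega
  · intro a ha
    simp only [Finset.mem_Icc] at ha
    omega
  · intro a ha; omega
  · intro a _; rfl

theorem stmt_5 (σ2 P R : ℝ) (hσ2 : 0 < σ2) (hP : 0 < P) (hR : 0 < R)
    (hRcap : R < 1 / 2 * Real.log (1 + P / σ2)) :
    ∃ ω Λ T : ℕ, 1 ≤ ω ∧ 2 * ω - 1 ≤ Λ ∧ 1 ≤ T ∧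
      ∀ c ∈ Finset.Icc 1 Λ, psiSE σ2 P R ω Λ T c = 0 := by
  set s : ℝ := P / σ2 with hs_def
  have hs : 0 < s := div_pos hP hσ2
  have hRlog : 2 * R < Real.log (1 + s) := by linarith
  -- Step 1: pick ω large enough
  have h0 : Filter.Tendsto (fun n : ℕ => (1:ℝ)/n) Filter.atTop (nhds 0) :=
    tendsto_one_div_atTop_nhds_zero_nat
  have h1 : Filter.Tendsto (fun n : ℕ => 2*s/(n:ℝ)) Filter.atTop (nhds 0) := by
    have := h0.const_mul (2*s)
    simpa [mul_one_div, div_eq_mul_inv] using this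
  have h2 : Filter.Tendsto (fun n : ℕ => Real.log (1 + 2*s/n)) Filter.atTop (nhds 0) := by
    have hc : ContinuousAt (fun x : ℝ => Real.log (1 + x)) 0 :=
      (Real.continuousAt_log (by norm_num)).comp (continuousAt_const.add continuousAt_id)
    have := hc.tendsto.comp h1
    simpa [Function.comp_def] using this
  have h3 : Filter.Tendsto (fun n : ℕ => 1 + 1/(n:ℝ)) Filter.atTop (nhds 1) := by
    simpa using (tendsto_const_nhds (x := (1:ℝ)) (f := Filter.atTop (α := ℕ))).add h0
  have hlim : Filter.Tendsto
      (fun n : ℕ => (Real.log (1+s) - Real.log (1 + 2*s/n)) / (1 + 1/n))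
      Filter.atTop (nhds (Real.log (1+s))) := by
    have := (Filter.Tendsto.sub
      (tendsto_const_nhds (x := Real.log (1+s)) (f := Filter.atTop (α := ℕ))) h2).div h3
      one_ne_zero
    simpa [Pi.div_def] using this
  obtain ⟨ω, hgω, hω⟩ :=
    ((hlim.eventually_const_lt hRlog).and (Filter.eventually_ge_atTop 1)).exists
  -- parameters
  set Λ : ℕ := ω ^ 2 with hΛ_def
  have hΛω : (Λ:ℝ) = (ω:ℝ)^2 := by push_cast [hΛ_def]; ring
  have hωR : (1:ℝ) ≤ (ω:ℝ) := by exact_mod_cast hω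
  have hωpos : (0:ℝ) < ω := by linarith
  have hΛpos : (0:ℝ) < (Λ:ℝ) := by rw [hΛω]; positivity
  set κ : ℝ := ((Λ:ℝ) + ω - 1) / Λ with hκ_def
  have hκ1 : 1 ≤ κ := by
    rw [hκ_def, le_div_iff₀ hΛpos]; linarith
  have hκpos : 0 < κ := lt_of_lt_of_le one_pos hκ1
  have hκ2 : κ ≤ 1 + 1/ω := by
    have h4 : (1 + 1/(ω:ℝ)) * (ω:ℝ)^2 = (ω:ℝ)^2 + ω := by
      field_simp
    rw [hκ_def, div_le_iff₀ hΛpos, hΛω, h4]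
    linarith
  set h' : ℝ := κ * s / ω with hh'_def
  have hh'pos : 0 < h' := by positivity
  -- the key one-step lemma
  have key : ∀ t c, 1 ≤ c → c ≤ t + 1 →
      (∀ c', 1 ≤ c' → c' ≤ t → psiSE σ2 P R ω Λ t c' = 0) →
      psiSE σ2 P R ω Λ (t+1) c = 0 := by
    intro t c hc hct hzero
    have hcond : 2 * R < P / ω *
        ∑ r ∈ Finset.Icc c (c + ω - 1), (phiSE σ2 P ω Λ (psiSE σ2 P R ω Λ t) r)⁻¹ := by
      set ψ := psiSE σ2 P R ω Λ t with hψ_def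
      -- pointwise bounds on φ
      have hφpos : ∀ r, 0 < phiSE σ2 P ω Λ ψ r := by
        intro r
        have hS : 0 ≤ ∑ c' ∈ Finset.Icc (max 1 (r + 1 - ω)) (min r Λ), ψ c' := by
          apply Finset.sum_nonneg
          intro c' _
          rcases psiSE_mem σ2 P R ω Λ t c' with h | h <;> rw [hψ_def, h] <;> norm_num
        have : (0:ℝ) ≤ κ * s / ω := by positivity
        unfold phiSE
        rw [← hκ_def, ← hs_def]
        have h5 : (0:ℝ) ≤ κ * s / ω * ∑ c' ∈ Finset.Icc (max 1 (r + 1 - ω)) (min r Λ), ψ c' :=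
          mul_nonneg this hS
        nlinarith
      have hφub : ∀ i : ℕ, phiSE σ2 P ω Λ ψ (c + i) ≤ σ2 * (1 + h' * (i+1)) := by
        intro i
        have hS : ∑ c' ∈ Finset.Icc (max 1 (c + i + 1 - ω)) (min (c+i) Λ), ψ c'
            ≤ ((i:ℝ) + 1) := by
          calc ∑ c' ∈ Finset.Icc (max 1 (c + i + 1 - ω)) (min (c+i) Λ), ψ c'
              ≤ ∑ c' ∈ Finset.Icc (max 1 (c + i + 1 - ω)) (min (c+i) Λ),
                  (if t < c' then (1:ℝ) else 0) := by
                apply Finset.sum_le_sum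
                intro c' hc'
                simp only [Finset.mem_Icc] at hc'
                by_cases h : t < c'
                · rw [if_pos h]
                  rcases psiSE_mem σ2 P R ω Λ t c' with hm | hm <;>
                    rw [show ψ c' = psiSE σ2 P R ω Λ t c' from rfl, hm] <;> norm_num
                · rw [if_neg h]
                  rw [hzero c' (le_trans (le_max_left 1 _) hc'.1) (by omega)]
            _ = ((Finset.Icc (max 1 (c + i + 1 - ω)) (min (c+i) Λ)).filter
                  (fun c' => t < c')).card := by
                rw [Finset.sum_boole]
            _ ≤ ((Finset.Icc (t+1) (c+i)).card : ℝ) := by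
                have hsub : (Finset.Icc (max 1 (c + i + 1 - ω)) (min (c+i) Λ)).filter
                    (fun c' => t < c') ⊆ Finset.Icc (t+1) (c+i) := by
                  intro x hx
                  simp only [Finset.mem_filter, Finset.mem_Icc] at hx ⊢
                  omega
                exact_mod_cast Nat.cast_le.mpr (Finset.card_le_card hsub)
            _ ≤ ((i:ℝ) + 1) := by
                rw [Nat.card_Icc]
                have : c + i + 1 - (t+1) ≤ i + 1 := by omega
                exact_mod_cast Nat.cast_le.mpr this
        unfold phiSE
        rw [← hκ_def, ← hs_def]
        have hcoef : (0:ℝ) ≤ κ * s / ω := by positivity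
        have : κ * s / ω * ∑ c' ∈ Finset.Icc (max 1 (c + i + 1 - ω)) (min (c+i) Λ), ψ c'
            ≤ κ * s / ω * ((i:ℝ)+1) := by
          exact mul_le_mul_of_nonneg_left hS hcoef
        have h5 : h' * ((i:ℝ)+1) = κ * s / ω * ((i:ℝ)+1) := by rw [hh'_def]
        nlinarith [hσ2.le]
      -- telescoping lower bound
      set F : ℕ → ℝ := fun j => Real.log (1 + ((j:ℝ)+1) * h') with hF_def
      have hFpos : ∀ j : ℕ, (0:ℝ) < 1 + ((j:ℝ)+1) * h' := by
        intro j; have : (0:ℝ) ≤ (j:ℝ) := Nat.cast_nonneg j; nlinarith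
      have htel : ∀ i : ℕ, F (i+1) - F i ≤ h' / (1 + ((i:ℝ)+1) * h') := by
        intro i
        have ha := hFpos i
        have hb := hFpos (i+1)
        have hlog : Real.log ((1 + ((i:ℝ)+1+1) * h') / (1 + ((i:ℝ)+1) * h'))
            ≤ (1 + ((i:ℝ)+1+1) * h') / (1 + ((i:ℝ)+1) * h') - 1 :=
          Real.log_le_sub_one_of_pos (by positivity)
        have hdiv : (1 + ((i:ℝ)+1+1) * h') / (1 + ((i:ℝ)+1) * h') - 1
            = h' / (1 + ((i:ℝ)+1) * h') := by
          field_simp; ring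
        rw [Real.log_div (by positivity) (by positivity)] at hlog
        rw [hF_def]
        push_cast
        rw [hdiv] at hlog
        convert hlog using 3 <;> push_cast <;> ring
      -- chain of inequalities
      have hre : ∑ r ∈ Finset.Icc c (c + ω - 1), (phiSE σ2 P ω Λ ψ r)⁻¹
          = ∑ i ∈ Finset.range ω, (phiSE σ2 P ω Λ ψ (c + i))⁻¹ := by
        rw [← sum_Icc_shift c ω (fun j => (phiSE σ2 P ω Λ ψ (c + j))⁻¹) hc hω]
        apply Finset.sum_congr rfl
        intro r hr
        simp only [Finset.mem_Icc] at hr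
        have : c + (r - c) = r := by omega
        rw [this]
      have hsum1 : ∑ i ∈ Finset.range ω, (σ2 * (1 + h' * ((i:ℝ)+1)))⁻¹
          ≤ ∑ r ∈ Finset.Icc c (c + ω - 1), (phiSE σ2 P ω Λ ψ r)⁻¹ := by
        rw [hre]
        apply Finset.sum_le_sum
        intro i _
        exact inv_anti₀ (hφpos (c+i)) (hφub i)
      have hterm : ∀ i : ℕ, κ⁻¹ * (F (i+1) - F i)
          ≤ P / ω * (σ2 * (1 + h' * ((i:ℝ)+1)))⁻¹ := by
        intro i
        have ha : (0:ℝ) < 1 + ((i:ℝ)+1) * h' := hFpos i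
        have hκ0 : κ ≠ 0 := ne_of_gt hκpos
        have hω0 : (ω:ℝ) ≠ 0 := ne_of_gt hωpos
        have hσ0 : σ2 ≠ 0 := ne_of_gt hσ2
        have ha0 : (1 + ((i:ℝ)+1) * h') ≠ 0 := ne_of_gt ha
        have heq : P / ω * (σ2 * (1 + h' * ((i:ℝ)+1)))⁻¹
            = κ⁻¹ * (h' / (1 + ((i:ℝ)+1) * h')) := by
          have hb0 : (1 + h' * ((i:ℝ)+1)) ≠ 0 := by
            rw [mul_comm h']; exact ha0
          rw [hh'_def] at ha0 ⊢
          rw [hh'_def] at hb0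
          rw [hs_def]
          field_simp
        rw [heq]
        exact mul_le_mul_of_nonneg_left (htel i) (le_of_lt (by positivity))
      have hsum2 : κ⁻¹ * (F ω - F 0)
          ≤ ∑ i ∈ Finset.range ω, P / ω * (σ2 * (1 + h' * ((i:ℝ)+1)))⁻¹ := by
        calc κ⁻¹ * (F ω - F 0) = ∑ i ∈ Finset.range ω, κ⁻¹ * (F (i+1) - F i) := by
              rw [← Finset.mul_sum, Finset.sum_range_sub]
          _ ≤ _ := Finset.sum_le_sum (fun i _ => hterm i)
      -- final numeric bound
      have hωh' : (ω:ℝ) * h' = κ * s := by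
        rw [hh'_def]; field_simp
      have hF0 : F 0 = Real.log (1 + h') := by rw [hF_def]; norm_num
      have hFω : Real.log (1 + s) ≤ F ω := by
        rw [hF_def]
        apply Real.log_le_log (by positivity)
        have : κ * s ≤ ((ω:ℝ)+1) * h' := by nlinarith
        nlinarith
      have hF0ub : F 0 ≤ Real.log (1 + 2*s/ω) := by
        rw [hF0]
        apply Real.log_le_log (by positivity)
        have hinv : 1/(ω:ℝ) ≤ 1 := by
          rw [div_le_one hωpos]; exact hωR
        have : h' ≤ 2*s/ω := by
          rw [hh'_def]
          rw [div_le_div_iff₀ hωpos hωpos]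
          have hκle2 : κ ≤ 2 := by linarith
          nlinarith [mul_nonneg (by linarith : (0:ℝ) ≤ 2 - κ) (mul_pos hs hωpos).le]
        linarith
      set Y : ℝ := Real.log (1+s) - Real.log (1 + 2*s/ω) with hY_def
      have hgY : 2 * R < Y / (1 + 1/ω) := hgω
      have hYpos : 0 < Y := by
        have h8 : (0:ℝ) < 1 + 1/(ω:ℝ) := by positivity
        have h9 : 0 < Y / (1 + 1/(ω:ℝ)) := by linarith
        rcases div_pos_iff.mp h9 with ⟨h, _⟩ | ⟨_, h⟩
        · exact h
        · linarith
      have hXY : Y ≤ F ω - F 0 := by rw [hY_def]; linarith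
      have hfrac : Y / (1 + 1/(ω:ℝ)) ≤ κ⁻¹ * (F ω - F 0) :=
        calc Y / (1 + 1/(ω:ℝ)) = (1 + 1/(ω:ℝ))⁻¹ * Y := by
              rw [div_eq_mul_inv, mul_comm]
          _ ≤ κ⁻¹ * Y :=
              mul_le_mul_of_nonneg_right (inv_anti₀ hκpos hκ2) hYpos.le
          _ ≤ κ⁻¹ * (F ω - F 0) := mul_le_mul_of_nonneg_left hXY (by positivity)
      calc 2 * R < Y / (1 + 1/ω) := hgY
        _ ≤ κ⁻¹ * (F ω - F 0) := hfrac
        _ ≤ ∑ i ∈ Finset.range ω, P / ω * (σ2 * (1 + h' * ((i:ℝ)+1)))⁻¹ := hsum2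
        _ = P / ω * ∑ i ∈ Finset.range ω, (σ2 * (1 + h' * ((i:ℝ)+1)))⁻¹ := by
            rw [Finset.mul_sum]
        _ ≤ P / ω * ∑ r ∈ Finset.Icc c (c + ω - 1), (phiSE σ2 P ω Λ ψ r)⁻¹ := by
            apply mul_le_mul_of_nonneg_left hsum1 (by positivity)
    simp only [psiSE]
    rw [if_pos hcond]
    ring
  -- induction
  have hzero : ∀ t c, 1 ≤ c → c ≤ t → psiSE σ2 P R ω Λ t c = 0 := by
    intro t
    induction t with
    | zero => intro c h1 h2; omega
    | succ t ih => intro c h1 h2; exact key t c h1 h2 ih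
  refine ⟨ω, Λ, Λ, hω, ?_, ?_, ?_⟩
  · -- 2ω - 1 ≤ ω²
    have : 2 * ω ≤ ω * ω + 1 := by nlinarith
    rw [hΛ_def]; rw [pow_two]; omega
  · rw [hΛ_def]; nlinarith
  · intro c hcmem
    simp only [Finset.mem_Icc] at hcmem
    exact hzero Λ c hcmem.1 hcmem.2
end

section
/- Let L ≥ 1 and M ≥ 1 be integers and let β ∈ ℝ^{ML} have, in each of its L sections sec(ℓ) = {(ℓ−1)M+1,…,ℓM}, exactly one entry equal to 1 and the rest 0. Let s ∈ ℝ^{ML} be arbitrary, and let β̂ be the section-wise hard decision of s (in each section, a 1 at an index attaining the maximum of s over that section, 0 elsewhere). Then the section error rate satisfies (1/L) Σ_{ℓ=1}^{L} 1{ β̂_{sec(ℓ)} ≠ β_{sec(ℓ)} } ≤ (4/L) ‖s − β‖₂². -/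
theorem stmt_9 (L M : ℕ) (hL : 1 ≤ L) (hM : 1 ≤ M)
    (β s βhat : Fin L → Fin M → ℝ)
    (ind : Fin L → Fin M)
    (hβ : ∀ ℓ, β ℓ = fun i => if i = ind ℓ then (1 : ℝ) else 0)
    (sel : Fin L → Fin M) (hsel : ∀ ℓ j, s ℓ j ≤ s ℓ (sel ℓ))
    (hβhat : ∀ ℓ, βhat ℓ = fun i => if i = sel ℓ then (1 : ℝ) else 0) :
    (1 / L : ℝ) * ∑ ℓ, (if βhat ℓ ≠ β ℓ then (1 : ℝ) else 0) ≤
      (4 / L : ℝ) * ∑ ℓ, ∑ i, (s ℓ i - β ℓ i) ^ 2 := by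
  have key : ∀ ℓ, (if βhat ℓ ≠ β ℓ then (1 : ℝ) else 0) ≤
      4 * ∑ i, (s ℓ i - β ℓ i) ^ 2 := by
    intro ℓ
    by_cases h : βhat ℓ ≠ β ℓ
    · rw [if_pos h]
      have hne : sel ℓ ≠ ind ℓ := by
        intro he
        apply h
        rw [hβhat, hβ, he]
      set a := s ℓ (ind ℓ) with ha
      set b := s ℓ (sel ℓ) with hb
      have hab : a ≤ b := hsel ℓ (ind ℓ)
      have hsum2 : (a - 1) ^ 2 + b ^ 2 ≤ ∑ i, (s ℓ i - β ℓ i) ^ 2 := by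
        have hsub : ({ind ℓ, sel ℓ} : Finset (Fin M)) ⊆ Finset.univ :=
          Finset.subset_univ _
        have h2 := Finset.sum_le_sum_of_subset_of_nonneg hsub
          (fun i _ _ => sq_nonneg (s ℓ i - β ℓ i))
        rw [Finset.sum_pair (Ne.symm hne)] at h2
        have h3 : β ℓ (ind ℓ) = 1 := by rw [hβ]; simp
        have h4 : β ℓ (sel ℓ) = 0 := by rw [hβ]; simp [hne]
        rw [h3, h4] at h2
        simpa using h2
      nlinarith [sq_nonneg (1 - a + b), sq_nonneg (b - a)]
    · rw [if_neg h]
      positivity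
  have hsum : ∑ ℓ, (if βhat ℓ ≠ β ℓ then (1 : ℝ) else 0) ≤
      4 * ∑ ℓ, ∑ i, (s ℓ i - β ℓ i) ^ 2 := by
    rw [Finset.mul_sum]
    exact Finset.sum_le_sum (fun ℓ _ => key ℓ)
  calc (1 / L : ℝ) * ∑ ℓ, (if βhat ℓ ≠ β ℓ then (1 : ℝ) else 0)
      ≤ (1 / L : ℝ) * (4 * ∑ ℓ, ∑ i, (s ℓ i - β ℓ i) ^ 2) :=
        mul_le_mul_of_nonneg_left hsum (by positivity)
    _ = (4 / L : ℝ) * ∑ ℓ, ∑ i, (s ℓ i - β ℓ i) ^ 2 := by ring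
end

section
/- In the asymptotic state-evolution recursion for the (ω,Λ) base matrix, the iterates are symmetric about the middle indices at every iteration: for all t ≥ 0, φ̄_r^t = φ̄_{Λ+ω−r}^t for all r ∈ {1,…,Λ+ω−1}, and ψ̄_c^t = ψ̄_{Λ+1−c}^t for all c ∈ {1,…,Λ}. -/
/-- If `ψ` is symmetric on `[1, Λ]`, then `phiSE` is symmetric on `[1, Λ+ω-1]`. -/
lemma phi_symm (σ2 P : ℝ) (ω Λ : ℕ) (hω : 1 ≤ ω) (hΛ : 2 * ω - 1 ≤ Λ)
    (ψ : ℕ → ℝ) (hψ : ∀ c ∈ Finset.Icc 1 Λ, ψ c = ψ (Λ + 1 - c))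
    (r : ℕ) (hr : r ∈ Finset.Icc 1 (Λ + ω - 1)) :
    phiSE σ2 P ω Λ ψ r = phiSE σ2 P ω Λ ψ (Λ + ω - r) := by
  simp only [Finset.mem_Icc] at hr
  unfold phiSE
  have hsum : ∑ c ∈ Finset.Icc (max 1 (r + 1 - ω)) (min r Λ), ψ c =
      ∑ c ∈ Finset.Icc (max 1 (Λ + ω - r + 1 - ω)) (min (Λ + ω - r) Λ), ψ c := by
    refine Finset.sum_nbij' (fun c => Λ + 1 - c) (fun c => Λ + 1 - c) ?_ ?_ ?_ ?_ ?_
    · intro a ha; simp only [Finset.mem_Icc, le_max_iff, max_le_iff, le_min_iff,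
        min_le_iff] at ha ⊢; omega
    · intro a ha; simp only [Finset.mem_Icc, le_max_iff, max_le_iff, le_min_iff,
        min_le_iff] at ha ⊢; omega
    · intro a ha; show Λ + 1 - (Λ + 1 - a) = a
      simp only [Finset.mem_Icc, max_le_iff, le_min_iff] at ha; omega
    · intro a ha; show Λ + 1 - (Λ + 1 - a) = a
      simp only [Finset.mem_Icc, max_le_iff, le_min_iff] at ha; omega
    · intro a ha
      simp only [Finset.mem_Icc, max_le_iff, le_min_iff] at ha
      exact hψ a (Finset.mem_Icc.mpr ⟨ha.1.1, ha.2.2⟩)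
  rw [hsum]

theorem stmt_10 (σ2 P R : ℝ) (ω Λ : ℕ)
    (hσ2 : 0 < σ2) (hP : 0 < P) (hR : 0 < R)
    (hω : 1 ≤ ω) (hΛ : 2 * ω - 1 ≤ Λ) :
    ∀ t : ℕ,
      (∀ r ∈ Finset.Icc 1 (Λ + ω - 1),
        phiSE σ2 P ω Λ (psiSE σ2 P R ω Λ t) r =
          phiSE σ2 P ω Λ (psiSE σ2 P R ω Λ t) (Λ + ω - r)) ∧
      (∀ c ∈ Finset.Icc 1 Λ,
        psiSE σ2 P R ω Λ t c = psiSE σ2 P R ω Λ t (Λ + 1 - c)) := by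
  have key : ∀ t : ℕ, ∀ c ∈ Finset.Icc 1 Λ,
      psiSE σ2 P R ω Λ t c = psiSE σ2 P R ω Λ t (Λ + 1 - c) := by
    intro t
    induction t with
    | zero => intro c _; simp [psiSE]
    | succ t ih =>
      intro c hc
      simp only [Finset.mem_Icc] at hc
      have hphi := phi_symm σ2 P ω Λ hω hΛ (psiSE σ2 P R ω Λ t) ih
      show (1 : ℝ) - _ = 1 - _
      congr 1
      have hsum : ∑ r ∈ Finset.Icc c (c + ω - 1),
            (phiSE σ2 P ω Λ (psiSE σ2 P R ω Λ t) r)⁻¹ =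
          ∑ r ∈ Finset.Icc (Λ + 1 - c) (Λ + 1 - c + ω - 1),
            (phiSE σ2 P ω Λ (psiSE σ2 P R ω Λ t) r)⁻¹ := by
        refine Finset.sum_nbij' (fun r => Λ + ω - r) (fun r => Λ + ω - r) ?_ ?_ ?_ ?_ ?_
        · intro a ha; simp only [Finset.mem_Icc] at ha ⊢; omega
        · intro a ha; simp only [Finset.mem_Icc] at ha ⊢; omega
        · intro a ha; show Λ + ω - (Λ + ω - a) = a
          simp only [Finset.mem_Icc] at ha; omega
        · intro a ha; show Λ + ω - (Λ + ω - a) = a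
          simp only [Finset.mem_Icc] at ha; omega
        · intro a ha
          simp only [Finset.mem_Icc] at ha
          exact congrArg Inv.inv (hphi a (Finset.mem_Icc.mpr ⟨by omega, by omega⟩))
      rw [hsum]
  intro t
  exact ⟨phi_symm σ2 P ω Λ hω hΛ (psiSE σ2 P R ω Λ t) (key t), key t⟩
end

section
/- Fix snr > 0, κ ≥ 1, and integers ω ≥ 2 and c with 1 ≤ c ≤ ω−1, and define F_c = (κ·snr/ω) · [ Σ_{r=c}^{ω−1} 1/(1 + (κ·snr/ω)·r) + c/(1 + κ·snr) ]. Then F_c > ln(1 + κ·snr) − (c/ω) · (κ·snr)²/(1 + κ·snr). -/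
theorem stmt_12 (snr κ : ℝ) (hsnr : 0 < snr) (hκ : 1 ≤ κ)
    (ω c : ℕ) (hω : 2 ≤ ω) (hc1 : 1 ≤ c) (hc2 : c ≤ ω - 1) :
    Real.log (1 + κ * snr) - (c : ℝ) / ω * (κ * snr) ^ 2 / (1 + κ * snr) <
      κ * snr / ω *
        ((∑ r ∈ Finset.Icc c (ω - 1), 1 / (1 + κ * snr / ω * r)) +
          c / (1 + κ * snr)) := by
  set s := κ * snr with hs_def
  have hs : 0 < s := mul_pos (lt_of_lt_of_le one_pos hκ) hsnr
  have hωR : (0:ℝ) < (ω:ℝ) := by positivity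
  set h := s / ω with hh_def
  have hh : 0 < h := div_pos hs hωR
  -- telescoping
  have htel : Real.log (1 + s) =
      ∑ r ∈ Finset.range ω, (Real.log (1 + (↑(r+1)) * h) - Real.log (1 + (r:ℝ) * h)) := by
    rw [Finset.sum_range_sub (fun r => Real.log (1 + (r:ℝ) * h))]
    have : (ω:ℝ) * h = s := by
      rw [hh_def]; field_simp
    simp [this]
  have hterm : ∀ r ∈ Finset.range ω,
      Real.log (1 + (↑(r+1)) * h) - Real.log (1 + (r:ℝ) * h) < h / (1 + (r:ℝ) * h) := by
    intro r _
    have ha : (0:ℝ) < 1 + (r:ℝ) * h := by positivity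
    have hda : 0 < h / (1 + (r:ℝ) * h) := div_pos hh ha
    have hx : (0:ℝ) < 1 + h / (1 + (r:ℝ) * h) := by positivity
    have key := Real.log_lt_sub_one_of_pos hx (by nlinarith)
    have heq : Real.log (1 + (↑(r+1)) * h) - Real.log (1 + (r:ℝ) * h)
        = Real.log (1 + h / (1 + (r:ℝ) * h)) := by
      rw [← Real.log_div (by positivity) (ne_of_gt ha)]
      congr 1
      push_cast
      field_simp
      ring
    rw [heq]; linarith
  have hsum : Real.log (1 + s) < ∑ r ∈ Finset.range ω, h / (1 + (r:ℝ) * h) := by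
    rw [htel]
    exact Finset.sum_lt_sum_of_nonempty (Finset.nonempty_range_iff.mpr (by omega)) hterm
  have hIcc : Finset.Icc c (ω-1) = Finset.Ico c ω := by
    rw [← Finset.Ico_add_one_right_eq_Icc]
    congr 1
    omega
  have hsplit : ∑ r ∈ Finset.range ω, h / (1 + (r:ℝ) * h)
      = (∑ r ∈ Finset.range c, h / (1 + (r:ℝ) * h))
        + ∑ r ∈ Finset.Icc c (ω-1), h / (1 + (r:ℝ) * h) := by
    rw [hIcc, ← Finset.sum_range_add_sum_Ico _ (by omega : c ≤ ω)]
  have hhead : ∑ r ∈ Finset.range c, h / (1 + (r:ℝ) * h) ≤ (c:ℝ) * h := by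
    calc ∑ r ∈ Finset.range c, h / (1 + (r:ℝ) * h)
        ≤ ∑ r ∈ Finset.range c, h := by
          apply Finset.sum_le_sum
          intro r _
          exact div_le_self hh.le (le_add_of_nonneg_right (by positivity))
      _ = (c:ℝ) * h := by
          rw [Finset.sum_const, Finset.card_range, nsmul_eq_mul]
  have hmulsum : h * (∑ r ∈ Finset.Icc c (ω-1), 1 / (1 + h * (r:ℝ)))
      = ∑ r ∈ Finset.Icc c (ω-1), h / (1 + (r:ℝ) * h) := by
    rw [Finset.mul_sum]
    apply Finset.sum_congr rfl
    intro r _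
    rw [mul_one_div, mul_comm (r:ℝ) h]
  have hcs : (c:ℝ)/ω * s^2/(1+s) + h * ((c:ℝ)/(1+s)) = (c:ℝ) * h := by
    rw [hh_def]
    field_simp
    ring
  have key : Real.log (1 + s) <
      (∑ r ∈ Finset.Icc c (ω-1), h / (1 + (r:ℝ) * h)) + (c:ℝ) * h := by
    rw [hsplit] at hsum
    linarith
  rw [mul_add, hmulsum]
  linarith
end

section
/- In the asymptotic state-evolution recursion for the (ω,Λ) base matrix, define G_c = (P/ω) Σ_{r=c}^{c+ω−1} 1/φ̄_r^0 for c ∈ {1,…,Λ}. Then (i) G_1 ≥ G_c for all c ∈ {1,…,Λ} (and by symmetry G_Λ = G_1); (ii) for every c with ω ≤ c ≤ Λ−ω+1, G_c = snr/(1 + κ·snr); and (iii) G_c ≥ snr/(1 + κ·snr) for all c ∈ {1,…,Λ}, so the minimum of G_c over c is attained at the middle columns. -/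
/-- First-iteration signal-to-effective-noise ratio `G_c = (P/ω) Σ_{r=c}^{c+ω-1} 1/φ_r^0`,
where `φ^0` is obtained from `ψ^0 ≡ 1`. -/
noncomputable def Gfirst (σ2 P : ℝ) (ω Λ : ℕ) (c : ℕ) : ℝ :=
  P / ω * ∑ r ∈ Finset.Icc c (c + ω - 1), (phiSE σ2 P ω Λ (fun _ => 1) r)⁻¹

def Naux (ω Λ r : ℕ) : ℕ := min r Λ + 1 - max 1 (r + 1 - ω)

noncomputable def faux (σ2 A : ℝ) (n : ℕ) : ℝ := (σ2 * (1 + A * n))⁻¹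

lemma Gfirst_eq (σ2 P : ℝ) (ω Λ : ℕ) (hω : 1 ≤ ω) (c : ℕ) :
    Gfirst σ2 P ω Λ c = P / ω * ∑ j ∈ Finset.range ω,
      faux σ2 ((((Λ : ℝ) + ω - 1) / Λ) * (P / σ2) / ω) (Naux ω Λ (c + j)) := by
  unfold Gfirst phiSE
  have h1 : Finset.Icc c (c + ω - 1) = Finset.Ico c (c + ω) := by
    rw [← Finset.Ico_add_one_right_eq_Icc]
    congr 1
    omega
  rw [h1, Finset.sum_Ico_eq_sum_range]
  have hcard : c + ω - c = ω := by omega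
  rw [hcard]
  refine congrArg _ (Finset.sum_congr rfl fun j hj => ?_)
  simp [faux, Naux, Nat.card_Icc]

lemma faux_anti (σ2 A : ℝ) (hσ2 : 0 < σ2) (hA : 0 ≤ A) {m n : ℕ} (h : m ≤ n) :
    faux σ2 A n ≤ faux σ2 A m := by
  have hm : (0:ℝ) ≤ (m:ℝ) := by positivity
  have hmn : (m:ℝ) ≤ n := by exact_mod_cast h
  unfold faux
  have h1 : 0 < σ2 * (1 + A * (m:ℝ)) := by nlinarith [mul_nonneg hA hm]
  have h2 : σ2 * (1 + A * (m:ℝ)) ≤ σ2 * (1 + A * (n:ℝ)) := by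
    have h3 := mul_le_mul_of_nonneg_left hmn hA
    nlinarith
  exact inv_anti₀ h1 h2


theorem stmt_13 (σ2 P snr κ : ℝ) (ω Λ : ℕ)
    (hσ2 : 0 < σ2) (hP : 0 < P)
    (hω : 1 ≤ ω) (hΛ : 2 * ω - 1 ≤ Λ)
    (hsnr : snr = P / σ2) (hκ : κ = ((Λ : ℝ) + ω - 1) / Λ) :
    (∀ c ∈ Finset.Icc 1 Λ, Gfirst σ2 P ω Λ c ≤ Gfirst σ2 P ω Λ 1) ∧
    Gfirst σ2 P ω Λ Λ = Gfirst σ2 P ω Λ 1 ∧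
    (∀ c : ℕ, ω ≤ c → c ≤ Λ - ω + 1 →
      Gfirst σ2 P ω Λ c = snr / (1 + κ * snr)) ∧
    (∀ c ∈ Finset.Icc 1 Λ, snr / (1 + κ * snr) ≤ Gfirst σ2 P ω Λ c) := by
  subst hsnr hκ
  have hΛ1 : 1 ≤ Λ := by omega
  have hωΛ : ω ≤ Λ := by omega
  have hωR : (0:ℝ) < ω := by exact_mod_cast hω
  have hΛR : (0:ℝ) < Λ := by exact_mod_cast hΛ1
  have hωR1 : (1:ℝ) ≤ ω := by exact_mod_cast hω
  obtain ⟨A, hAdef⟩ : ∃ A : ℝ, A = (((Λ : ℝ) + ω - 1) / Λ) * (P / σ2) / ω := ⟨_, rfl⟩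
  have hK : (0:ℝ) < ((Λ : ℝ) + ω - 1) / Λ := by
    apply div_pos (by linarith) hΛR
  have hA0 : 0 < A := hAdef ▸ div_pos (mul_pos hK (div_pos hP hσ2)) hωR
  have hG : ∀ c, Gfirst σ2 P ω Λ c
      = P / ω * ∑ j ∈ Finset.range ω, faux σ2 A (Naux ω Λ (c + j)) := by
    intro c
    rw [Gfirst_eq σ2 P ω Λ hω c, ← hAdef]
  have hfanti : ∀ {m n : ℕ}, m ≤ n → faux σ2 A n ≤ faux σ2 A m :=
    fun h => faux_anti σ2 A hσ2 hA0.le h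
  have hPω : (0:ℝ) ≤ P / ω := le_of_lt (div_pos hP hωR)
  have hden : (0:ℝ) < 1 + (((Λ : ℝ) + ω - 1) / Λ) * (P / σ2) := by
    have := mul_pos hK (div_pos hP hσ2); linarith
  -- value of the constant middle sum
  have hmid : P / ω * ∑ _j ∈ Finset.range ω, faux σ2 A ω
      = P / σ2 / (1 + (((Λ : ℝ) + ω - 1) / Λ) * (P / σ2)) := by
    rw [Finset.sum_const, Finset.card_range, nsmul_eq_mul]
    have hAω : A * ω = (((Λ : ℝ) + ω - 1) / Λ) * (P / σ2) := by
      rw [hAdef]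
      field_simp
    unfold faux
    rw [hAω]
    rw [div_mul_eq_mul_div, div_eq_div_iff hωR.ne' hden.ne']
    have key : ∀ x : ℝ, x ≠ 0 → P * (↑ω * (σ2 * x)⁻¹) * x = P / σ2 * ↑ω := by
      intro x hx
      field_simp
    exact key _ hden.ne'
  -- the first column sum
  have hG1 : ∑ j ∈ Finset.range ω, faux σ2 A (Naux ω Λ (1 + j))
      = ∑ j ∈ Finset.range ω, faux σ2 A (j + 1) := by
    refine Finset.sum_congr rfl fun j hj => ?_
    have hj' := Finset.mem_range.mp hj
    congr 1
    simp only [Naux]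
    omega
  -- reflected sum
  have hrefl : ∑ j ∈ Finset.range ω, faux σ2 A (ω - j)
      = ∑ j ∈ Finset.range ω, faux σ2 A (j + 1) := by
    rw [← Finset.sum_range_reflect (fun j => faux σ2 A (j + 1)) ω]
    refine Finset.sum_congr rfl fun j hj => ?_
    have hj' := Finset.mem_range.mp hj
    congr 1
    omega
  refine ⟨?_, ?_, ?_, ?_⟩
  · -- G_c ≤ G_1
    intro c hc
    obtain ⟨hc1, hc2⟩ := Finset.mem_Icc.mp hc
    rw [hG, hG, hG1]
    by_cases hcase : c + ω ≤ Λ + 1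
    · refine mul_le_mul_of_nonneg_left (Finset.sum_le_sum fun j hj => ?_) hPω
      have hj' := Finset.mem_range.mp hj
      apply hfanti
      simp only [Naux]
      omega
    · rw [← hrefl]
      refine mul_le_mul_of_nonneg_left (Finset.sum_le_sum fun j hj => ?_) hPω
      have hj' := Finset.mem_range.mp hj
      apply hfanti
      simp only [Naux]
      omega
  · -- G_Λ = G_1
    rw [hG, hG, hG1, ← hrefl]
    congr 1
    refine Finset.sum_congr rfl fun j hj => ?_
    have hj' := Finset.mem_range.mp hj
    congr 1
    simp only [Naux]
    omega
  · -- middle columns exact value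
    intro c hc1 hc2
    rw [hG, ← hmid]
    congr 1
    refine Finset.sum_congr rfl fun j hj => ?_
    have hj' := Finset.mem_range.mp hj
    congr 1
    simp only [Naux]
    omega
  · -- lower bound
    intro c hc
    obtain ⟨hc1, hc2⟩ := Finset.mem_Icc.mp hc
    rw [hG, ← hmid]
    refine mul_le_mul_of_nonneg_left (Finset.sum_le_sum fun j hj => ?_) hPω
    have hj' := Finset.mem_range.mp hj
    apply hfanti
    simp only [Naux]
    omega
end
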